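/- Let ε ≥ 0, η > 0, R_E > 0 and 0 < R < R_E. Let w, ψ : ℝ × ℝ² → ℝ be smooth functions such that for every t ∈ ℝ: on Ω, ∂_t(w − ε·Δw) = (1/R)·Δw + R·ψ_θ + J(ψ, w − ε·Δw) and ∂_t(ε·Δ²ψ − Δψ) = −(1/R)·Δ²ψ + ε·R·Δ(w_θ) + J(Δψ − ε·Δ²ψ, ψ) + ε·J(Δw, w); on ∂Ω, w(t,·) = ψ(t,·) = 0 and ∇ψ(t,·) = 0; and, with E(t) = ‖w‖² + ε‖∇w‖² + ‖∇ψ‖² + ε‖Δψ‖², I₁(t) = ‖∇w‖² + ‖Δψ‖², I₂(t) = ⟨ψ_θ, w − ε·Δw⟩, the solution satisfies for all t the energy-stability bound I₂(t) ≤ I₁(t)/R_E² and the Poincaré inequalities ‖∇w(t,·)‖² ≥ η‖w(t,·)‖² and ‖Δψ(t,·)‖² ≥ η‖∇ψ(t,·)‖². Then, with c_R = (2Rη/(1+εη))·(1/R² − 1/R_E²) > 0, the energy decays exponentially: E(t) ≤ e^{−c_R·t}·E(0) for all t ≥ 0. -/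

import Mathlib

open MeasureTheory

set_option maxHeartbeats 1000000

noncomputable section

/-- Partial derivative with respect to the first (x) variable. -/
def pdx (f : ℝ × ℝ → ℝ) : ℝ × ℝ → ℝ := fun p => deriv (fun x => f (x, p.2)) p.1

/-- Partial derivative with respect to the second (y) variable. -/
def pdy (f : ℝ × ℝ → ℝ) : ℝ × ℝ → ℝ := fun p => deriv (fun y => f (p.1, y)) p.2

/-- The Laplacian Δf = f_xx + f_yy. -/
def lap (f : ℝ × ℝ → ℝ) : ℝ × ℝ → ℝ := fun p => pdx (pdx f) p + pdy (pdy f) p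

/-- The azimuthal derivative f_θ = x f_y − y f_x. -/
def azim (f : ℝ × ℝ → ℝ) : ℝ × ℝ → ℝ := fun p => p.1 * pdy f p - p.2 * pdx f p

/-- The Jacobian (advection) bilinear form J(f,g) = f_x g_y − f_y g_x. -/
def jac (f g : ℝ × ℝ → ℝ) : ℝ × ℝ → ℝ := fun p => pdx f p * pdy g p - pdy f p * pdx g p

/-- The open unit disk Ω. -/
def disk : Set (ℝ × ℝ) := {p | p.1 ^ 2 + p.2 ^ 2 < 1}

/-- The unit circle ∂Ω. -/
def bdry : Set (ℝ × ℝ) := {p | p.1 ^ 2 + p.2 ^ 2 = 1}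

/-- The L² inner product ⟨f,g⟩ = ∫_Ω f g dA. -/
def ip (f g : ℝ × ℝ → ℝ) : ℝ := ∫ p in disk, f p * g p

/-- The squared L² norm ‖f‖² over Ω. -/
def nsq (f : ℝ × ℝ → ℝ) : ℝ := ∫ p in disk, (f p) ^ 2

/-- The squared L² norm of the gradient: ‖∇f‖² = ‖f_x‖² + ‖f_y‖². -/
def gradNsq (f : ℝ × ℝ → ℝ) : ℝ := nsq (pdx f) + nsq (pdy f)





variable {E : Type*} [NormedAddCommGroup E] [NormedSpace ℝ E]

/-- Directional derivative. -/
def dd (v : E) (f : E → ℝ) : E → ℝ := fun q => fderiv ℝ f q v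

lemma contDiff_dd {f : E → ℝ} (v : E) (hf : ContDiff ℝ (⊤:ℕ∞) f) :
    ContDiff ℝ (⊤:ℕ∞) (dd v f) := by
  have h1 : ContDiff ℝ (⊤:ℕ∞) (fderiv ℝ f) := by
    apply hf.fderiv_right
    exact_mod_cast le_refl _
  exact (ContinuousLinearMap.apply ℝ ℝ v).contDiff.comp h1

lemma dd_comm {f : E → ℝ} (u v : E) (hf : ContDiff ℝ (⊤:ℕ∞) f) :
    dd u (dd v f) = dd v (dd u f) := by
  have hdf : ContDiff ℝ (⊤:ℕ∞) (fderiv ℝ f) := by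
    apply hf.fderiv_right; exact_mod_cast le_refl _
  have hdiff : Differentiable ℝ f := hf.differentiable (by simp)
  funext p
  have key : ∀ z : E, dd u (dd v f) p = (fderiv ℝ (fderiv ℝ f) p u) v := by
    intro z
    have h1 : HasFDerivAt (fderiv ℝ f) (fderiv ℝ (fderiv ℝ f) p) p :=
      (hdf.differentiable (by simp) p).hasFDerivAt
    have h2 : HasFDerivAt (fun q => fderiv ℝ f q v)
        ((ContinuousLinearMap.apply ℝ ℝ v).comp (fderiv ℝ (fderiv ℝ f) p)) p :=
      (ContinuousLinearMap.apply ℝ ℝ v).hasFDerivAt.comp p h1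
    exact congrArg (fun L => L u) h2.fderiv
  have key' : dd v (dd u f) p = (fderiv ℝ (fderiv ℝ f) p v) u := by
    have h1 : HasFDerivAt (fderiv ℝ f) (fderiv ℝ (fderiv ℝ f) p) p :=
      (hdf.differentiable (by simp) p).hasFDerivAt
    have h2 : HasFDerivAt (fun q => fderiv ℝ f q u)
        ((ContinuousLinearMap.apply ℝ ℝ u).comp (fderiv ℝ (fderiv ℝ f) p)) p :=
      (ContinuousLinearMap.apply ℝ ℝ u).hasFDerivAt.comp p h1
    exact congrArg (fun L => L v) h2.fderiv
  rw [key 0, key']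
  exact second_derivative_symmetric (fun y => (hdiff y).hasFDerivAt)
    ((hdf.differentiable (by simp) p).hasFDerivAt) u v

lemma dd_add {f g : E → ℝ} (v : E) (hf : Differentiable ℝ f) (hg : Differentiable ℝ g) :
    dd v (fun q => f q + g q) = fun q => dd v f q + dd v g q := by
  funext p; simp [dd, fderiv_fun_add (hf p) (hg p)]

lemma dd_sub {f g : E → ℝ} (v : E) (hf : Differentiable ℝ f) (hg : Differentiable ℝ g) :
    dd v (fun q => f q - g q) = fun q => dd v f q - dd v g q := by
  funext p; simp [dd, fderiv_fun_sub (hf p) (hg p)]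

lemma dd_const_mul {f : E → ℝ} (v : E) (c : ℝ) (hf : Differentiable ℝ f) :
    dd v (fun q => c * f q) = fun q => c * dd v f q := by
  funext p; simp [dd, fderiv_const_mul (hf p) c]

lemma dd_mul {f g : E → ℝ} (v : E) (hf : Differentiable ℝ f) (hg : Differentiable ℝ g) :
    dd v (fun q => f q * g q) = fun q => dd v f q * g q + f q * dd v g q := by
  funext p
  simp [dd, fderiv_fun_mul (hf p) (hg p)]
  ring

lemma dd_sq {f : E → ℝ} (v : E) (hf : Differentiable ℝ f) :
    dd v (fun q => f q ^ 2) = fun q => 2 * f q * dd v f q := by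
  have := dd_mul v hf hf
  simp only [← pow_two] at this ⊢
  rw [this]; funext q; ring


/-! ### Slice lemmas -/

lemma pdx_apply {f : ℝ×ℝ → ℝ} {p : ℝ×ℝ} (hf : DifferentiableAt ℝ f p) :
    pdx f p = dd ((1:ℝ),(0:ℝ)) f p := by
  have hι : HasDerivAt (fun x : ℝ => ((x, p.2) : ℝ×ℝ)) ((1:ℝ),(0:ℝ)) p.1 :=
    (hasDerivAt_id p.1).prodMk (hasDerivAt_const p.1 p.2)
  have h2 : HasFDerivAt f (fderiv ℝ f p) ((fun x : ℝ => ((x, p.2) : ℝ×ℝ)) p.1) := by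
    simpa using hf.hasFDerivAt
  exact (h2.comp_hasDerivAt p.1 hι).deriv

lemma pdy_apply {f : ℝ×ℝ → ℝ} {p : ℝ×ℝ} (hf : DifferentiableAt ℝ f p) :
    pdy f p = dd ((0:ℝ),(1:ℝ)) f p := by
  have hι : HasDerivAt (fun y : ℝ => ((p.1, y) : ℝ×ℝ)) ((0:ℝ),(1:ℝ)) p.2 :=
    (hasDerivAt_const p.2 p.1).prodMk (hasDerivAt_id p.2)
  have h2 : HasFDerivAt f (fderiv ℝ f p) ((fun y : ℝ => ((p.1, y) : ℝ×ℝ)) p.2) := by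
    simpa using hf.hasFDerivAt
  exact (h2.comp_hasDerivAt p.2 hι).deriv

lemma pdx_eq {f : ℝ×ℝ → ℝ} (hf : ContDiff ℝ (⊤:ℕ∞) f) :
    pdx f = dd ((1:ℝ),(0:ℝ)) f := by
  funext p; exact pdx_apply ((hf.differentiable (by simp)) p)

lemma pdy_eq {f : ℝ×ℝ → ℝ} (hf : ContDiff ℝ (⊤:ℕ∞) f) :
    pdy f = dd ((0:ℝ),(1:ℝ)) f := by
  funext p; exact pdy_apply ((hf.differentiable (by simp)) p)

/-- time direction, x direction, y direction in the joint space -/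
def dT (F : ℝ×(ℝ×ℝ) → ℝ) : ℝ×(ℝ×ℝ) → ℝ := dd ((1:ℝ),((0:ℝ),(0:ℝ))) F
def dX (F : ℝ×(ℝ×ℝ) → ℝ) : ℝ×(ℝ×ℝ) → ℝ := dd ((0:ℝ),((1:ℝ),(0:ℝ))) F
def dY (F : ℝ×(ℝ×ℝ) → ℝ) : ℝ×(ℝ×ℝ) → ℝ := dd ((0:ℝ),((0:ℝ),(1:ℝ))) F

lemma slice_contDiff {F : ℝ×(ℝ×ℝ) → ℝ} (hF : ContDiff ℝ (⊤:ℕ∞) F) (t : ℝ) :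
    ContDiff ℝ (⊤:ℕ∞) (fun p => F (t,p)) :=
  hF.comp (contDiff_const.prodMk contDiff_id)

lemma deriv_tslice {F : ℝ×(ℝ×ℝ) → ℝ} {t : ℝ} {p : ℝ×ℝ}
    (hF : DifferentiableAt ℝ F (t,p)) :
    deriv (fun s => F (s,p)) t = dT F (t,p) := by
  have hι : HasDerivAt (fun s : ℝ => ((s, p) : ℝ×(ℝ×ℝ))) ((1:ℝ),((0:ℝ),(0:ℝ))) t :=
    (hasDerivAt_id t).prodMk (hasDerivAt_const t p)
  exact (hF.hasFDerivAt.comp_hasDerivAt t hι).deriv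

lemma pdx_tslice {F : ℝ×(ℝ×ℝ) → ℝ} (hF : ContDiff ℝ (⊤:ℕ∞) F) (t : ℝ) :
    pdx (fun q => F (t,q)) = fun q => dX F (t,q) := by
  funext p
  rw [pdx_apply ((slice_contDiff hF t).differentiable (by simp) p)]
  have hι : HasFDerivAt (fun q : ℝ×ℝ => ((t, q) : ℝ×(ℝ×ℝ)))
      ((ContinuousLinearMap.inr ℝ ℝ (ℝ×ℝ))) p :=
    hasFDerivAt_prodMk_right t p
  have hc : HasFDerivAt (fun q : ℝ×ℝ => F (t, q))
      ((fderiv ℝ F (t,p)).comp (ContinuousLinearMap.inr ℝ ℝ (ℝ×ℝ))) p :=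
    ((hF.differentiable (by simp) (t,p)).hasFDerivAt).comp p hι
  have := hc.fderiv
  simp only [dd, this]
  rfl

lemma pdy_tslice {F : ℝ×(ℝ×ℝ) → ℝ} (hF : ContDiff ℝ (⊤:ℕ∞) F) (t : ℝ) :
    pdy (fun q => F (t,q)) = fun q => dY F (t,q) := by
  funext p
  rw [pdy_apply ((slice_contDiff hF t).differentiable (by simp) p)]
  have hι : HasFDerivAt (fun q : ℝ×ℝ => ((t, q) : ℝ×(ℝ×ℝ)))
      ((ContinuousLinearMap.inr ℝ ℝ (ℝ×ℝ))) p :=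
    hasFDerivAt_prodMk_right t p
  have hc : HasFDerivAt (fun q : ℝ×ℝ => F (t, q))
      ((fderiv ℝ F (t,p)).comp (ContinuousLinearMap.inr ℝ ℝ (ℝ×ℝ))) p :=
    ((hF.differentiable (by simp) (t,p)).hasFDerivAt).comp p hι
  have := hc.fderiv
  simp only [dd, this]
  rfl

/-! ### Integrability on the disk, and the compact-support divergence theorem -/

lemma isOpen_disk : IsOpen disk :=
  isOpen_lt (by continuity) continuous_const

lemma measurableSet_disk : MeasurableSet disk := isOpen_disk.measurableSet

lemma disk_subset_closedBall : disk ⊆ Metric.closedBall (0 : ℝ×ℝ) 1 := by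
  intro p hp
  have h : p.1^2 + p.2^2 < 1 := hp
  have h1 : p.1^2 ≤ 1 := by nlinarith [sq_nonneg p.1, sq_nonneg p.2]
  have h2 : p.2^2 ≤ 1 := by nlinarith [sq_nonneg p.1, sq_nonneg p.2]
  have h1' : |p.1| ≤ 1 := abs_le_one_iff_mul_self_le_one.mpr (by nlinarith)
  have h2' : |p.2| ≤ 1 := abs_le_one_iff_mul_self_le_one.mpr (by nlinarith)
  simp only [Metric.mem_closedBall, dist_zero_right, Prod.norm_def, Real.norm_eq_abs]
  exact max_le h1' h2'

lemma integrableOn_disk {f : ℝ×ℝ → ℝ} (hf : Continuous f) : IntegrableOn f disk := by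
  exact (hf.continuousOn.integrableOn_compact (isCompact_closedBall _ _)).mono_set
    disk_subset_closedBall

lemma continuous_pdx {f : ℝ×ℝ → ℝ} (hf : ContDiff ℝ (⊤:ℕ∞) f) : Continuous (pdx f) := by
  rw [pdx_eq hf]; exact (contDiff_dd _ hf).continuous

lemma continuous_pdy {f : ℝ×ℝ → ℝ} (hf : ContDiff ℝ (⊤:ℕ∞) f) : Continuous (pdy f) := by
  rw [pdy_eq hf]; exact (contDiff_dd _ hf).continuous

lemma contDiff_pdx {f : ℝ×ℝ → ℝ} (hf : ContDiff ℝ (⊤:ℕ∞) f) : ContDiff ℝ (⊤:ℕ∞) (pdx f) := by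
  rw [pdx_eq hf]; exact contDiff_dd _ hf

lemma contDiff_pdy {f : ℝ×ℝ → ℝ} (hf : ContDiff ℝ (⊤:ℕ∞) f) : ContDiff ℝ (⊤:ℕ∞) (pdy f) := by
  rw [pdy_eq hf]; exact contDiff_dd _ hf

lemma continuous_lap {f : ℝ×ℝ → ℝ} (hf : ContDiff ℝ (⊤:ℕ∞) f) : Continuous (lap f) := by
  have : lap f = fun p => pdx (pdx f) p + pdy (pdy f) p := rfl
  rw [this]
  exact ((continuous_pdx (contDiff_pdx hf)).add (continuous_pdy (contDiff_pdy hf)))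

lemma contDiff_lap {f : ℝ×ℝ → ℝ} (hf : ContDiff ℝ (⊤:ℕ∞) f) : ContDiff ℝ (⊤:ℕ∞) (lap f) := by
  have : lap f = fun p => pdx (pdx f) p + pdy (pdy f) p := rfl
  rw [this]
  exact (contDiff_pdx (contDiff_pdx hf)).add (contDiff_pdy (contDiff_pdy hf))

/-- 1D: the integral of the derivative of a function vanishing outside a bounded set is zero. -/
lemma integral_deriv_zero (g : ℝ → ℝ) (hg : ContDiff ℝ (⊤:ℕ∞) g) (M : ℝ) (hM0 : 0 ≤ M)
    (hM : ∀ x : ℝ, M ≤ |x| → g x = 0) : ∫ x : ℝ, deriv g x = 0 := by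
  have hdiff : Differentiable ℝ g := hg.differentiable (by simp)
  have hcont : Continuous (deriv g) := hg.continuous_deriv (by exact_mod_cast le_top)
  have hd0 : ∀ x : ℝ, M < |x| → deriv g x = 0 := by
    intro x hx
    have hopen : IsOpen {y : ℝ | M < |y|} := isOpen_lt continuous_const continuous_abs
    have hev : (fun y => g y) =ᶠ[nhds x] (fun _ => (0:ℝ)) := by
      filter_upwards [hopen.mem_nhds hx] with y hy
      exact hM y (le_of_lt hy)
    rw [hev.deriv_eq]; simp
  have hsub : ∀ x : ℝ, x ∉ Set.Icc (-(M+1)) (M+1) → deriv g x = 0 := by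
    intro x hx
    rw [Set.mem_Icc, not_and_or] at hx
    apply hd0
    rcases hx with hx | hx
    · push_neg at hx; rw [abs_of_neg (by linarith)]; linarith
    · push_neg at hx; rw [abs_of_pos (by linarith)]; linarith
  rw [← MeasureTheory.setIntegral_eq_integral_of_forall_compl_eq_zero hsub]
  rw [MeasureTheory.integral_Icc_eq_integral_Ioc,
    ← intervalIntegral.integral_of_le (by linarith : -(M+1) ≤ M+1)]
  rw [intervalIntegral.integral_deriv_eq_sub (fun x _ => hdiff x)
    (hcont.intervalIntegrable _ _)]
  rw [hM (M+1) (by rw [abs_of_pos (by linarith)]; linarith), hM (-(M+1)) (by rw [abs_of_neg (by linarith)]; linarith)]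
  ring

lemma pdx_zero_of_not_mem_tsupport {f : ℝ×ℝ → ℝ} (hf : ContDiff ℝ (⊤:ℕ∞) f) {p : ℝ×ℝ}
    (hp : p ∉ tsupport f) : pdx f p = 0 := by
  rw [pdx_eq hf]
  simp [dd, fderiv_of_notMem_tsupport ℝ hp]

lemma pdy_zero_of_not_mem_tsupport {f : ℝ×ℝ → ℝ} (hf : ContDiff ℝ (⊤:ℕ∞) f) {p : ℝ×ℝ}
    (hp : p ∉ tsupport f) : pdy f p = 0 := by
  rw [pdy_eq hf]
  simp [dd, fderiv_of_notMem_tsupport ℝ hp]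

lemma integral_pdx_zero (F : ℝ×ℝ → ℝ) (hF : ContDiff ℝ (⊤:ℕ∞) F)
    (hc : HasCompactSupport F) : ∫ p : ℝ×ℝ, pdx F p = 0 := by
  have hcont : Continuous (pdx F) := continuous_pdx hF
  have hc' : HasCompactSupport (pdx F) :=
    hc.mono' (fun p hp => by
      by_contra h
      exact hp (pdx_zero_of_not_mem_tsupport hF h))
  have hint : Integrable (pdx F) := hcont.integrable_of_hasCompactSupport hc'
  obtain ⟨r, hr⟩ := hc.isCompact.isBounded.subset_closedBall 0
  set M : ℝ := max r 0 with hMdef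
  have hrM : tsupport F ⊆ Metric.closedBall 0 M :=
    hr.trans (Metric.closedBall_subset_closedBall (le_max_left _ _))
  have hvan : ∀ p : ℝ×ℝ, M < ‖p‖ → F p = 0 := by
    intro p hp
    have : p ∉ tsupport F := by
      intro hmem
      have := hrM hmem
      simp only [Metric.mem_closedBall, dist_zero_right] at this
      linarith
    exact image_eq_zero_of_notMem_tsupport this
  rw [MeasureTheory.Measure.volume_eq_prod] at hint ⊢
  rw [MeasureTheory.integral_prod_symm _ hint]
  have inner : ∀ y : ℝ, (∫ x : ℝ, pdx F (x, y)) = 0 := by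
    intro y
    have heq : (fun x : ℝ => pdx F (x, y)) = deriv (fun x => F (x, y)) := rfl
    rw [heq]
    have hg : ContDiff ℝ (⊤:ℕ∞) (fun x : ℝ => F (x, y)) :=
      hF.comp (contDiff_id.prodMk contDiff_const)
    apply integral_deriv_zero _ hg (M+1) (by positivity)
    intro x hx
    show F (x, y) = 0
    apply hvan
    have : |x| ≤ ‖((x,y) : ℝ×ℝ)‖ := by
      simp only [Prod.norm_def, Real.norm_eq_abs]; exact le_max_left _ _
    linarith
  simp only [inner, integral_zero]

lemma integral_pdy_zero (F : ℝ×ℝ → ℝ) (hF : ContDiff ℝ (⊤:ℕ∞) F)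
    (hc : HasCompactSupport F) : ∫ p : ℝ×ℝ, pdy F p = 0 := by
  have hcont : Continuous (pdy F) := continuous_pdy hF
  have hc' : HasCompactSupport (pdy F) :=
    hc.mono' (fun p hp => by
      by_contra h
      exact hp (pdy_zero_of_not_mem_tsupport hF h))
  have hint : Integrable (pdy F) := hcont.integrable_of_hasCompactSupport hc'
  obtain ⟨r, hr⟩ := hc.isCompact.isBounded.subset_closedBall 0
  set M : ℝ := max r 0 with hMdef
  have hrM : tsupport F ⊆ Metric.closedBall 0 M :=
    hr.trans (Metric.closedBall_subset_closedBall (le_max_left _ _))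
  have hvan : ∀ p : ℝ×ℝ, M < ‖p‖ → F p = 0 := by
    intro p hp
    have : p ∉ tsupport F := by
      intro hmem
      have := hrM hmem
      simp only [Metric.mem_closedBall, dist_zero_right] at this
      linarith
    exact image_eq_zero_of_notMem_tsupport this
  rw [MeasureTheory.Measure.volume_eq_prod] at hint ⊢
  rw [MeasureTheory.integral_prod _ hint]
  have inner : ∀ x : ℝ, (∫ y : ℝ, pdy F (x, y)) = 0 := by
    intro x
    have heq : (fun y : ℝ => pdy F (x, y)) = deriv (fun y => F (x, y)) := rfl
    rw [heq]
    have hg : ContDiff ℝ (⊤:ℕ∞) (fun y : ℝ => F (x, y)) :=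
      hF.comp (contDiff_const.prodMk contDiff_id)
    apply integral_deriv_zero _ hg (M+1) (by positivity)
    intro y hy
    show F (x, y) = 0
    apply hvan
    have : |y| ≤ ‖((x,y) : ℝ×ℝ)‖ := by
      simp only [Prod.norm_def, Real.norm_eq_abs]; exact le_max_right _ _
    linarith
  simp only [inner, integral_zero]

/-! ### Cutoff functions and boundary Lipschitz bounds -/

lemma smoothTransition_deriv_zero_of_nonpos {x : ℝ} (hx : x ≤ 0) :
    deriv Real.smoothTransition x = 0 := by
  have hC : IsClosed {y : ℝ | deriv Real.smoothTransition y = 0} :=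
    isClosed_eq ((Real.smoothTransition.contDiff (n := ⊤)).continuous_deriv
      (by exact_mod_cast le_top)) continuous_const
  have hsub : Set.Iio (0:ℝ) ⊆ {y : ℝ | deriv Real.smoothTransition y = 0} := by
    intro y hy
    have hev : Real.smoothTransition =ᶠ[nhds y] (fun _ => (0:ℝ)) := by
      filter_upwards [isOpen_Iio.mem_nhds hy] with z hz
      exact Real.smoothTransition.zero_of_nonpos (le_of_lt hz)
    show deriv _ y = 0
    rw [hev.deriv_eq]; simp
  have : Set.Iic (0:ℝ) ⊆ {y : ℝ | deriv Real.smoothTransition y = 0} := by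
    rw [← closure_Iio]
    exact hC.closure_subset_iff.mpr hsub
  exact this hx

lemma smoothTransition_deriv_zero_of_one_le {x : ℝ} (hx : 1 ≤ x) :
    deriv Real.smoothTransition x = 0 := by
  have hC : IsClosed {y : ℝ | deriv Real.smoothTransition y = 0} :=
    isClosed_eq ((Real.smoothTransition.contDiff (n := ⊤)).continuous_deriv
      (by exact_mod_cast le_top)) continuous_const
  have hsub : Set.Ioi (1:ℝ) ⊆ {y : ℝ | deriv Real.smoothTransition y = 0} := by
    intro y hy
    have hev : Real.smoothTransition =ᶠ[nhds y] (fun _ => (1:ℝ)) := by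
      filter_upwards [isOpen_Ioi.mem_nhds hy] with z hz
      exact Real.smoothTransition.one_of_one_le (le_of_lt hz)
    show deriv _ y = 0
    rw [hev.deriv_eq]; simp
  have : Set.Ici (1:ℝ) ⊆ {y : ℝ | deriv Real.smoothTransition y = 0} := by
    rw [← closure_Ioi]
    exact hC.closure_subset_iff.mpr hsub
  exact this hx

lemma smoothTransition_deriv_bound :
    ∃ M : ℝ, 0 ≤ M ∧ ∀ x : ℝ, |deriv Real.smoothTransition x| ≤ M := by
  have hcont : ContinuousOn (fun y => |deriv Real.smoothTransition y|) (Set.Icc 0 1) :=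
    (((Real.smoothTransition.contDiff (n := ⊤)).continuous_deriv
      (by exact_mod_cast le_top)).abs).continuousOn
  obtain ⟨M₀, hM₀⟩ := (isCompact_Icc (a := (0:ℝ)) (b := 1)).exists_bound_of_continuousOn hcont
  refine ⟨max M₀ 0, le_max_right _ _, fun x => ?_⟩
  rcases le_or_gt x 0 with h | h
  · rw [smoothTransition_deriv_zero_of_nonpos h]; simp [le_max_iff]
  rcases le_or_gt 1 x with h' | h'
  · rw [smoothTransition_deriv_zero_of_one_le h']; simp [le_max_iff]
  · have := hM₀ x ⟨le_of_lt h, le_of_lt h'⟩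
    rw [Real.norm_eq_abs] at this
    exact le_trans (le_of_eq (abs_abs _).symm) (le_trans this (le_max_left _ _))

/-- A C¹ function vanishing on the unit circle is bounded by `L (1 - |p|²)` near the circle. -/
lemma bdry_lipschitz (F : ℝ×ℝ → ℝ) (hF : ContDiff ℝ (⊤:ℕ∞) F)
    (hb : ∀ p ∈ bdry, F p = 0) :
    ∃ L : ℝ, 0 ≤ L ∧ ∀ p : ℝ×ℝ, 1/2 ≤ p.1^2 + p.2^2 → p.1^2 + p.2^2 ≤ 1 →
      |F p| ≤ L * (1 - (p.1^2 + p.2^2)) := by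
  have hdF : Continuous (fun p : ℝ×ℝ => ‖fderiv ℝ F p‖) := by
    have : ContDiff ℝ (⊤:ℕ∞) (fderiv ℝ F) := hF.fderiv_right (by exact_mod_cast le_refl _)
    exact this.continuous.norm
  obtain ⟨L₀, hL₀⟩ := (isCompact_closedBall (0:ℝ×ℝ) 2).exists_bound_of_continuousOn
    hdF.continuousOn
  set L := max L₀ 0 with hLdef
  have hL : ∀ q ∈ Metric.closedBall (0:ℝ×ℝ) 2, ‖fderiv ℝ F q‖ ≤ L := by
    intro q hq
    exact le_trans (le_of_eq (Real.norm_eq_abs _ ▸ (abs_of_nonneg (norm_nonneg _)).symm))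
      (le_trans (hL₀ q hq) (le_max_left _ _))
  refine ⟨L, le_max_right _ _, fun p hp1 hp2 => ?_⟩
  set s := p.1^2 + p.2^2 with hsdef
  have hs0 : (0:ℝ) < s := by nlinarith
  set r := Real.sqrt s with hrdef
  have hr0 : 0 < r := Real.sqrt_pos.mpr hs0
  have hr2 : r^2 = s := Real.sq_sqrt (le_of_lt hs0)
  have hr1 : r ≤ 1 := by
    rw [hrdef]
    calc Real.sqrt s ≤ Real.sqrt 1 := Real.sqrt_le_sqrt hp2
    _ = 1 := Real.sqrt_one
  set q : ℝ×ℝ := (p.1/r, p.2/r) with hqdef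
  have hqb : q ∈ bdry := by
    show (p.1/r)^2 + (p.2/r)^2 = 1
    field_simp
    rw [← hsdef, ← hr2]
  have hFq : F q = 0 := hb q hqb
  have habs1 : |p.1| ≤ r := by
    rw [← Real.sqrt_sq_eq_abs, hrdef]
    exact Real.sqrt_le_sqrt (by nlinarith)
  have habs2 : |p.2| ≤ r := by
    rw [← Real.sqrt_sq_eq_abs, hrdef]
    exact Real.sqrt_le_sqrt (by nlinarith)
  have hpmem : p ∈ Metric.closedBall (0:ℝ×ℝ) 2 := by
    simp only [Metric.mem_closedBall, dist_zero_right, Prod.norm_def, Real.norm_eq_abs]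
    exact max_le (by linarith) (by linarith)
  have hqmem : q ∈ Metric.closedBall (0:ℝ×ℝ) 2 := by
    simp only [Metric.mem_closedBall, dist_zero_right, Prod.norm_def, Real.norm_eq_abs, hqdef]
    have h1 : |p.1/r| ≤ 1 := by rw [abs_div, abs_of_pos hr0]; exact div_le_one_of_le₀ habs1 (le_of_lt hr0)
    have h2 : |p.2/r| ≤ 1 := by rw [abs_div, abs_of_pos hr0]; exact div_le_one_of_le₀ habs2 (le_of_lt hr0)
    exact max_le (by linarith) (by linarith)
  have hdiffat : ∀ x ∈ Metric.closedBall (0:ℝ×ℝ) 2, DifferentiableAt ℝ F x :=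
    fun x _ => (hF.differentiable (by simp)) x
  have key := Convex.norm_image_sub_le_of_norm_fderiv_le hdiffat hL
    (convex_closedBall _ _) hqmem hpmem
  have hnorm : ‖p - q‖ ≤ 1 - s := by
    have hcoord1 : |p.1 - p.1/r| ≤ 1 - r := by
      have : p.1 - p.1/r = p.1 * (1 - 1/r) := by ring
      rw [this, abs_mul]
      have h1r : |1 - 1/r| = 1/r - 1 := by
        rw [abs_of_nonpos]
        · ring
        · have : 1 ≤ 1/r := (one_le_div hr0).mpr (by linarith)
          linarith
      rw [h1r]
      calc |p.1| * (1/r - 1) ≤ r * (1/r - 1) := by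
            apply mul_le_mul_of_nonneg_right habs1
            have : 1 ≤ 1/r := (one_le_div hr0).mpr (by linarith)
            linarith
      _ = 1 - r := by field_simp
    have hcoord2 : |p.2 - p.2/r| ≤ 1 - r := by
      have : p.2 - p.2/r = p.2 * (1 - 1/r) := by ring
      rw [this, abs_mul]
      have h1r : |1 - 1/r| = 1/r - 1 := by
        rw [abs_of_nonpos]
        · ring
        · have : 1 ≤ 1/r := (one_le_div hr0).mpr (by linarith)
          linarith
      rw [h1r]
      calc |p.2| * (1/r - 1) ≤ r * (1/r - 1) := by
            apply mul_le_mul_of_nonneg_right habs2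
            have : 1 ≤ 1/r := (one_le_div hr0).mpr (by linarith)
            linarith
      _ = 1 - r := by field_simp
    have hrs : 1 - r ≤ 1 - s := by
      have : s ≤ r := by rw [← hr2]; nlinarith
      linarith
    calc ‖p - q‖ = max |p.1 - p.1/r| |p.2 - p.2/r| := by
          simp [Prod.norm_def, hqdef, Real.norm_eq_abs, Prod.sub_def]
    _ ≤ 1 - r := max_le hcoord1 hcoord2
    _ ≤ 1 - s := hrs
  calc |F p| = ‖F p - F q‖ := by rw [hFq]; simp [Real.norm_eq_abs]
  _ ≤ L * ‖p - q‖ := key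
  _ ≤ L * (1 - s) := by
      apply mul_le_mul_of_nonneg_left hnorm (le_max_right _ _)

/-! ### The cutoff function -/

/-- smooth cutoff: equals 1 well inside the disk, 0 outside. -/
def cutoff (n : ℕ) : ℝ×ℝ → ℝ :=
  fun p => Real.smoothTransition ((1 - (p.1^2 + p.2^2)) * (n+2))

lemma contDiff_cutoffInner (n : ℕ) :
    ContDiff ℝ (⊤:ℕ∞) (fun p : ℝ×ℝ => (1 - (p.1^2 + p.2^2)) * (n+2)) :=
  (contDiff_const.sub ((contDiff_fst.pow 2).add (contDiff_snd.pow 2))).mul contDiff_const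

lemma contDiff_cutoff (n : ℕ) : ContDiff ℝ (⊤:ℕ∞) (cutoff n) :=
  (Real.smoothTransition.contDiff (n := ⊤)).comp (contDiff_cutoffInner n)

lemma cutoff_nonneg (n : ℕ) (p : ℝ×ℝ) : 0 ≤ cutoff n p :=
  Real.smoothTransition.nonneg _

lemma cutoff_le_one (n : ℕ) (p : ℝ×ℝ) : cutoff n p ≤ 1 :=
  Real.smoothTransition.le_one _

lemma cutoff_eq_one {n : ℕ} {p : ℝ×ℝ} (h : p.1^2 + p.2^2 ≤ 1 - 1/(n+2)) :
    cutoff n p = 1 := by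
  apply Real.smoothTransition.one_of_one_le
  have hn : (0:ℝ) < n + 2 := by positivity
  have hle : 1/((n:ℝ)+2) ≤ 1 - (p.1^2+p.2^2) := by linarith
  calc (1:ℝ) = (1/((n:ℝ)+2)) * ((n:ℝ)+2) := by field_simp
  _ ≤ (1 - (p.1^2 + p.2^2)) * ((n:ℝ)+2) := mul_le_mul_of_nonneg_right hle (le_of_lt hn)

lemma cutoff_eq_zero {n : ℕ} {p : ℝ×ℝ} (h : 1 ≤ p.1^2 + p.2^2) :
    cutoff n p = 0 := by
  apply Real.smoothTransition.zero_of_nonpos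
  have hn : (0:ℝ) < n + 2 := by positivity
  have : 1 - (p.1^2 + p.2^2) ≤ 0 := by linarith
  exact mul_nonpos_of_nonpos_of_nonneg this (le_of_lt hn)

lemma hasDerivAt_inner_x (n : ℕ) (p : ℝ×ℝ) :
    HasDerivAt (fun x : ℝ => (1 - (x^2 + p.2^2)) * (n+2)) (-(2*p.1)*(n+2)) p.1 := by
  have h1 : HasDerivAt (fun x : ℝ => x^2) (2*p.1) p.1 := by
    simpa using hasDerivAt_pow 2 p.1
  have h2 : HasDerivAt (fun x : ℝ => 1 - (x^2 + p.2^2)) (-(2*p.1)) p.1 := by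
    simpa using ((h1.add_const (p.2^2)).const_sub 1)
  exact h2.mul_const _

lemma hasDerivAt_inner_y (n : ℕ) (p : ℝ×ℝ) :
    HasDerivAt (fun y : ℝ => (1 - (p.1^2 + y^2)) * (n+2)) (-(2*p.2)*(n+2)) p.2 := by
  have h1 : HasDerivAt (fun y : ℝ => y^2) (2*p.2) p.2 := by
    simpa using hasDerivAt_pow 2 p.2
  have h2 : HasDerivAt (fun y : ℝ => 1 - (p.1^2 + y^2)) (-(2*p.2)) p.2 := by
    simpa using ((h1.const_add (p.1^2)).const_sub 1)
  exact h2.mul_const _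

lemma pdx_cutoff (n : ℕ) (p : ℝ×ℝ) :
    pdx (cutoff n) p
      = deriv Real.smoothTransition ((1 - (p.1^2 + p.2^2)) * (n+2)) * (-(2*p.1)*(n+2)) := by
  have hT : HasDerivAt Real.smoothTransition
      (deriv Real.smoothTransition ((1 - (p.1^2 + p.2^2)) * (n+2)))
      ((1 - (p.1^2 + p.2^2)) * (n+2)) :=
    (((Real.smoothTransition.contDiff (n := ⊤)).differentiable
      (by simp)) _).hasDerivAt
  have := hT.comp p.1 (hasDerivAt_inner_x n p)
  exact this.deriv

lemma pdy_cutoff (n : ℕ) (p : ℝ×ℝ) :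
    pdy (cutoff n) p
      = deriv Real.smoothTransition ((1 - (p.1^2 + p.2^2)) * (n+2)) * (-(2*p.2)*(n+2)) := by
  have hT : HasDerivAt Real.smoothTransition
      (deriv Real.smoothTransition ((1 - (p.1^2 + p.2^2)) * (n+2)))
      ((1 - (p.1^2 + p.2^2)) * (n+2)) :=
    (((Real.smoothTransition.contDiff (n := ⊤)).differentiable
      (by simp)) _).hasDerivAt
  have := hT.comp p.2 (hasDerivAt_inner_y n p)
  exact this.deriv

lemma pdx_cutoff_zero_inner {n : ℕ} {p : ℝ×ℝ} (h : p.1^2 + p.2^2 ≤ 1 - 1/(n+2)) :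
    pdx (cutoff n) p = 0 := by
  rw [pdx_cutoff]
  have hn : (0:ℝ) < n + 2 := by positivity
  have harg : 1 ≤ (1 - (p.1^2 + p.2^2)) * (n+2) := by
    have hle : 1/((n:ℝ)+2) ≤ 1 - (p.1^2+p.2^2) := by linarith
    calc (1:ℝ) = (1/((n:ℝ)+2)) * ((n:ℝ)+2) := by field_simp
    _ ≤ (1 - (p.1^2 + p.2^2)) * ((n:ℝ)+2) := mul_le_mul_of_nonneg_right hle (le_of_lt hn)
  rw [smoothTransition_deriv_zero_of_one_le harg, zero_mul]

lemma pdy_cutoff_zero_inner {n : ℕ} {p : ℝ×ℝ} (h : p.1^2 + p.2^2 ≤ 1 - 1/(n+2)) :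
    pdy (cutoff n) p = 0 := by
  rw [pdy_cutoff]
  have hn : (0:ℝ) < n + 2 := by positivity
  have harg : 1 ≤ (1 - (p.1^2 + p.2^2)) * (n+2) := by
    have hle : 1/((n:ℝ)+2) ≤ 1 - (p.1^2+p.2^2) := by linarith
    calc (1:ℝ) = (1/((n:ℝ)+2)) * ((n:ℝ)+2) := by field_simp
    _ ≤ (1 - (p.1^2 + p.2^2)) * ((n:ℝ)+2) := mul_le_mul_of_nonneg_right hle (le_of_lt hn)
  rw [smoothTransition_deriv_zero_of_one_le harg, zero_mul]

lemma pdx_cutoff_zero_outer {n : ℕ} {p : ℝ×ℝ} (h : 1 ≤ p.1^2 + p.2^2) :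
    pdx (cutoff n) p = 0 := by
  rw [pdx_cutoff]
  have hn : (0:ℝ) < n + 2 := by positivity
  have harg : (1 - (p.1^2 + p.2^2)) * (n+2) ≤ 0 :=
    mul_nonpos_of_nonpos_of_nonneg (by linarith) (le_of_lt hn)
  rw [smoothTransition_deriv_zero_of_nonpos harg, zero_mul]

lemma pdy_cutoff_zero_outer {n : ℕ} {p : ℝ×ℝ} (h : 1 ≤ p.1^2 + p.2^2) :
    pdy (cutoff n) p = 0 := by
  rw [pdy_cutoff]
  have hn : (0:ℝ) < n + 2 := by positivity
  have harg : (1 - (p.1^2 + p.2^2)) * (n+2) ≤ 0 :=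
    mul_nonpos_of_nonpos_of_nonneg (by linarith) (le_of_lt hn)
  rw [smoothTransition_deriv_zero_of_nonpos harg, zero_mul]

/-- product rule for pdx, for smooth functions -/
lemma pdx_mul {f g : ℝ×ℝ → ℝ} (hf : ContDiff ℝ (⊤:ℕ∞) f) (hg : ContDiff ℝ (⊤:ℕ∞) g) :
    pdx (fun q => f q * g q) = fun q => pdx f q * g q + f q * pdx g q := by
  rw [pdx_eq (hf.mul hg), dd_mul _ (hf.differentiable (by simp))
    (hg.differentiable (by simp)), ← pdx_eq hf, ← pdx_eq hg]

lemma pdy_mul {f g : ℝ×ℝ → ℝ} (hf : ContDiff ℝ (⊤:ℕ∞) f) (hg : ContDiff ℝ (⊤:ℕ∞) g) :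
    pdy (fun q => f q * g q) = fun q => pdy f q * g q + f q * pdy g q := by
  rw [pdy_eq (hf.mul hg), dd_mul _ (hf.differentiable (by simp))
    (hg.differentiable (by simp)), ← pdy_eq hf, ← pdy_eq hg]

/-! ### The divergence theorem on the disk -/

lemma hasCompactSupport_of_vanish {f : ℝ×ℝ → ℝ}
    (h : ∀ p : ℝ×ℝ, 1 ≤ p.1^2 + p.2^2 → f p = 0) : HasCompactSupport f := by
  apply HasCompactSupport.intro (isCompact_closedBall (0:ℝ×ℝ) 1)
  intro x hx
  apply h
  simp only [Metric.mem_closedBall, dist_zero_right, Prod.norm_def, Real.norm_eq_abs,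
    not_le, lt_max_iff] at hx
  rcases hx with hx | hx
  · nlinarith [sq_nonneg x.2, sq_abs x.1]
  · nlinarith [sq_nonneg x.1, sq_abs x.2]

lemma integrable_pdx_cs {F : ℝ×ℝ → ℝ} (hF : ContDiff ℝ (⊤:ℕ∞) F)
    (hc : HasCompactSupport F) : Integrable (pdx F) :=
  (continuous_pdx hF).integrable_of_hasCompactSupport
    (hc.mono' (fun p hp => by
      by_contra h
      exact hp (pdx_zero_of_not_mem_tsupport hF h)))

lemma integrable_pdy_cs {F : ℝ×ℝ → ℝ} (hF : ContDiff ℝ (⊤:ℕ∞) F)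
    (hc : HasCompactSupport F) : Integrable (pdy F) :=
  (continuous_pdy hF).integrable_of_hasCompactSupport
    (hc.mono' (fun p hp => by
      by_contra h
      exact hp (pdy_zero_of_not_mem_tsupport hF h)))

/-- **Divergence theorem on the unit disk** for a C^∞ vector field vanishing on the circle. -/
theorem div_disk (F1 F2 : ℝ×ℝ → ℝ) (h1 : ContDiff ℝ (⊤:ℕ∞) F1) (h2 : ContDiff ℝ (⊤:ℕ∞) F2)
    (hb : ∀ p ∈ bdry, F1 p = 0 ∧ F2 p = 0) :
    ∫ p in disk, (pdx F1 p + pdy F2 p) = 0 := by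
  have hG1 : ∀ n : ℕ, ContDiff ℝ (⊤:ℕ∞) (fun q => cutoff n q * F1 q) :=
    fun n => (contDiff_cutoff n).mul h1
  have hG2 : ∀ n : ℕ, ContDiff ℝ (⊤:ℕ∞) (fun q => cutoff n q * F2 q) :=
    fun n => (contDiff_cutoff n).mul h2
  have hcs1 : ∀ n : ℕ, HasCompactSupport (fun q => cutoff n q * F1 q) := fun n =>
    hasCompactSupport_of_vanish (fun p hp => by rw [cutoff_eq_zero hp, zero_mul])
  have hcs2 : ∀ n : ℕ, HasCompactSupport (fun q => cutoff n q * F2 q) := fun n =>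
    hasCompactSupport_of_vanish (fun p hp => by rw [cutoff_eq_zero hp, zero_mul])
  have hplane : ∀ n : ℕ,
      ∫ p : ℝ×ℝ, (pdx (fun q => cutoff n q * F1 q) p + pdy (fun q => cutoff n q * F2 q) p) = 0 := by
    intro n
    rw [MeasureTheory.integral_add (integrable_pdx_cs (hG1 n) (hcs1 n))
      (integrable_pdy_cs (hG2 n) (hcs2 n)),
      integral_pdx_zero _ (hG1 n) (hcs1 n), integral_pdy_zero _ (hG2 n) (hcs2 n), add_zero]
  have hcompl : ∀ n : ℕ, ∀ p : ℝ×ℝ, p ∉ disk →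
      pdx (fun q => cutoff n q * F1 q) p + pdy (fun q => cutoff n q * F2 q) p = 0 := by
    intro n p hp
    have hs : 1 ≤ p.1^2 + p.2^2 := le_of_not_gt hp
    rw [congrFun (pdx_mul (contDiff_cutoff n) h1) p,
      congrFun (pdy_mul (contDiff_cutoff n) h2) p,
      pdx_cutoff_zero_outer hs, pdy_cutoff_zero_outer hs, cutoff_eq_zero hs]
    ring
  have hdisk0 : ∀ n : ℕ,
      ∫ p in disk, (pdx (fun q => cutoff n q * F1 q) p + pdy (fun q => cutoff n q * F2 q) p)
        = 0 := by
    intro n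
    rw [MeasureTheory.setIntegral_eq_integral_of_forall_compl_eq_zero (hcompl n)]
    exact hplane n
  have hA : ∀ n : ℕ, ∫ p in disk, cutoff n p * (pdx F1 p + pdy F2 p)
      = - ∫ p in disk, (pdx (cutoff n) p * F1 p + pdy (cutoff n) p * F2 p) := by
    intro n
    have hsplit : ∀ p ∈ disk,
        pdx (fun q => cutoff n q * F1 q) p + pdy (fun q => cutoff n q * F2 q) p
        = cutoff n p * (pdx F1 p + pdy F2 p)
          + (pdx (cutoff n) p * F1 p + pdy (cutoff n) p * F2 p) := by
      intro p _
      rw [congrFun (pdx_mul (contDiff_cutoff n) h1) p,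
        congrFun (pdy_mul (contDiff_cutoff n) h2) p]
      ring
    have hint1 : IntegrableOn (fun p => cutoff n p * (pdx F1 p + pdy F2 p)) disk :=
      integrableOn_disk (((contDiff_cutoff n).continuous).mul
        ((continuous_pdx h1).add (continuous_pdy h2)))
    have hint2 : IntegrableOn (fun p => pdx (cutoff n) p * F1 p + pdy (cutoff n) p * F2 p) disk :=
      integrableOn_disk (((continuous_pdx (contDiff_cutoff n)).mul h1.continuous).add
        ((continuous_pdy (contDiff_cutoff n)).mul h2.continuous))
    have h0 := hdisk0 n
    rw [MeasureTheory.setIntegral_congr_fun measurableSet_disk hsplit,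
      MeasureTheory.integral_add hint1 hint2] at h0
    linarith
  have htendA : Filter.Tendsto (fun n => ∫ p in disk, cutoff n p * (pdx F1 p + pdy F2 p))
      Filter.atTop (nhds (∫ p in disk, (pdx F1 p + pdy F2 p))) := by
    apply MeasureTheory.tendsto_integral_of_dominated_convergence
      (fun p => |pdx F1 p + pdy F2 p|)
    · intro n
      exact (((contDiff_cutoff n).continuous.mul
        ((continuous_pdx h1).add (continuous_pdy h2))).aestronglyMeasurable)
    · exact (integrableOn_disk ((continuous_pdx h1).add (continuous_pdy h2))).abs
    · intro n
      apply MeasureTheory.ae_restrict_of_forall_mem measurableSet_disk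
      intro p _
      rw [Real.norm_eq_abs, abs_mul]
      calc |cutoff n p| * |pdx F1 p + pdy F2 p| ≤ 1 * |pdx F1 p + pdy F2 p| := by
            apply mul_le_mul_of_nonneg_right _ (abs_nonneg _)
            rw [abs_of_nonneg (cutoff_nonneg n p)]
            exact cutoff_le_one n p
      _ = |pdx F1 p + pdy F2 p| := one_mul _
    · apply MeasureTheory.ae_restrict_of_forall_mem measurableSet_disk
      intro p hp
      have hs : p.1^2 + p.2^2 < 1 := hp
      obtain ⟨N, hN⟩ := exists_nat_one_div_lt (by linarith : (0:ℝ) < 1 - (p.1^2 + p.2^2))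
      apply Filter.Tendsto.congr' _ tendsto_const_nhds
      filter_upwards [Filter.eventually_ge_atTop N] with n hn
      have hcast : (N:ℝ) ≤ (n:ℝ) := by exact_mod_cast hn
      have hle : 1/((n:ℝ)+2) ≤ 1 - (p.1^2+p.2^2) := by
        have h1 : 1/((n:ℝ)+2) ≤ 1/((N:ℝ)+1) := by
          apply one_div_le_one_div_of_le (by positivity)
          linarith
        linarith
      rw [cutoff_eq_one (by linarith), one_mul]
  have htendB : Filter.Tendsto
      (fun n => ∫ p in disk, (pdx (cutoff n) p * F1 p + pdy (cutoff n) p * F2 p))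
      Filter.atTop (nhds 0) := by
    obtain ⟨M, hM0, hM⟩ := smoothTransition_deriv_bound
    obtain ⟨L1, hL10, hL1⟩ := bdry_lipschitz F1 h1 (fun p hp => (hb p hp).1)
    obtain ⟨L2, hL20, hL2⟩ := bdry_lipschitz F2 h2 (fun p hp => (hb p hp).2)
    set C : ℝ := 2*M*L1 + 2*M*L2 with hCdef
    have hC0 : 0 ≤ C := by positivity
    set S : ℕ → Set (ℝ×ℝ) := fun n => {p | 1 - 1/((n:ℝ)+2) < p.1^2 + p.2^2 ∧ p.1^2 + p.2^2 < 1}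
      with hSdef
    have hfc : Continuous (fun p : ℝ×ℝ => p.1^2 + p.2^2) := by continuity
    have hSmeas : ∀ n, MeasurableSet (S n) := fun n =>
      ((isOpen_lt continuous_const hfc).inter (isOpen_lt hfc continuous_const)).measurableSet
    have hSvol : ∀ n, volume (S n) < ⊤ := by
      intro n
      calc volume (S n) ≤ volume (Metric.closedBall (0:ℝ×ℝ) 1) :=
            measure_mono (fun p hp => disk_subset_closedBall hp.2)
      _ < ⊤ := (isCompact_closedBall _ _).measure_lt_top
    have hgbound : ∀ n, ∀ p : ℝ×ℝ,
        |pdx (cutoff n) p * F1 p + pdy (cutoff n) p * F2 p|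
          ≤ Set.indicator (S n) (fun _ => C) p := by
      intro n p
      by_cases hmem : p ∈ S n
      · rw [Set.indicator_of_mem hmem]
        obtain ⟨hlow, hhigh⟩ := hmem
        have hn2 : (0:ℝ) < (n:ℝ)+2 := by positivity
        have hhalf : 1/2 ≤ p.1^2 + p.2^2 := by
          have hcast : (0:ℝ) ≤ (n:ℝ) := Nat.cast_nonneg n
          have : 1/((n:ℝ)+2) ≤ 1/2 := by
            apply one_div_le_one_div_of_le (by norm_num)
            linarith
          linarith
        have hb1 := hL1 p hhalf (le_of_lt hhigh)
        have hb2 := hL2 p hhalf (le_of_lt hhigh)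
        have habs1 : |p.1| ≤ 1 := by nlinarith [sq_abs p.1, sq_nonneg p.2, abs_nonneg p.1]
        have habs2 : |p.2| ≤ 1 := by nlinarith [sq_abs p.2, sq_nonneg p.1, abs_nonneg p.2]
        have hsize : ((n:ℝ)+2) * (1 - (p.1^2 + p.2^2)) ≤ 1 := by
          have h1 : 1 - (p.1^2+p.2^2) < 1/((n:ℝ)+2) := by linarith
          calc ((n:ℝ)+2) * (1 - (p.1^2 + p.2^2)) ≤ ((n:ℝ)+2) * (1/((n:ℝ)+2)) :=
                mul_le_mul_of_nonneg_left (le_of_lt h1) (le_of_lt hn2)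
          _ = 1 := by field_simp
        have hnn : (0:ℝ) ≤ 1 - (p.1^2+p.2^2) := by linarith
        have hterm1 : |pdx (cutoff n) p * F1 p| ≤ 2*M*L1 := by
          rw [pdx_cutoff, abs_mul, abs_mul]
          have e2 : |(-(2*p.1)*((n:ℝ)+2))| ≤ 2*((n:ℝ)+2) := by
            rw [abs_mul, abs_neg, abs_mul,
              abs_of_pos hn2, abs_of_pos (by norm_num : (0:ℝ) < 2)]
            nlinarith
          calc |deriv Real.smoothTransition ((1 - (p.1^2 + p.2^2)) * ((n:ℝ)+2))| *
                |(-(2*p.1)*((n:ℝ)+2))| * |F1 p|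
              ≤ M * (2*((n:ℝ)+2)) * (L1 * (1 - (p.1^2 + p.2^2))) := by
                apply mul_le_mul (mul_le_mul (hM _) e2 (abs_nonneg _) hM0) hb1 (abs_nonneg _)
                positivity
          _ = 2*M*L1 * (((n:ℝ)+2) * (1 - (p.1^2 + p.2^2))) := by ring
          _ ≤ 2*M*L1 * 1 := mul_le_mul_of_nonneg_left hsize (by positivity)
          _ = 2*M*L1 := mul_one _
        have hterm2 : |pdy (cutoff n) p * F2 p| ≤ 2*M*L2 := by
          rw [pdy_cutoff, abs_mul, abs_mul]
          have e2 : |(-(2*p.2)*((n:ℝ)+2))| ≤ 2*((n:ℝ)+2) := by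
            rw [abs_mul, abs_neg, abs_mul,
              abs_of_pos hn2, abs_of_pos (by norm_num : (0:ℝ) < 2)]
            nlinarith
          calc |deriv Real.smoothTransition ((1 - (p.1^2 + p.2^2)) * ((n:ℝ)+2))| *
                |(-(2*p.2)*((n:ℝ)+2))| * |F2 p|
              ≤ M * (2*((n:ℝ)+2)) * (L2 * (1 - (p.1^2 + p.2^2))) := by
                apply mul_le_mul (mul_le_mul (hM _) e2 (abs_nonneg _) hM0) hb2 (abs_nonneg _)
                positivity
          _ = 2*M*L2 * (((n:ℝ)+2) * (1 - (p.1^2 + p.2^2))) := by ring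
          _ ≤ 2*M*L2 * 1 := mul_le_mul_of_nonneg_left hsize (by positivity)
          _ = 2*M*L2 := mul_one _
        calc |pdx (cutoff n) p * F1 p + pdy (cutoff n) p * F2 p|
            ≤ |pdx (cutoff n) p * F1 p| + |pdy (cutoff n) p * F2 p| := abs_add_le _ _
        _ ≤ C := by rw [hCdef]; linarith
      · rw [Set.indicator_of_notMem hmem]
        have hz : pdx (cutoff n) p * F1 p + pdy (cutoff n) p * F2 p = 0 := by
          simp only [hSdef, Set.mem_setOf_eq, not_and_or, not_lt] at hmem
          rcases hmem with hmem | hmem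
          · rw [pdx_cutoff_zero_inner (by linarith), pdy_cutoff_zero_inner (by linarith),
              zero_mul, zero_mul, add_zero]
          · rw [pdx_cutoff_zero_outer hmem, pdy_cutoff_zero_outer hmem,
              zero_mul, zero_mul, add_zero]
        rw [hz]; simp
    have hSanti : Antitone S := by
      intro m n hmn p hp
      obtain ⟨h1', h2'⟩ := hp
      refine ⟨lt_of_le_of_lt ?_ h1', h2'⟩
      have hcast : (m:ℝ) ≤ (n:ℝ) := by exact_mod_cast hmn
      have : 1/((n:ℝ)+2) ≤ 1/((m:ℝ)+2) := by
        apply one_div_le_one_div_of_le (by positivity)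
        linarith
      linarith
    have hSempty : (⋂ n, S n) = ∅ := by
      ext p
      simp only [Set.mem_iInter, Set.mem_empty_iff_false, iff_false, not_forall]
      by_cases hs : p.1^2 + p.2^2 < 1
      · obtain ⟨N, hN⟩ := exists_nat_one_div_lt (by linarith : (0:ℝ) < 1 - (p.1^2 + p.2^2))
        refine ⟨N, fun hmem => ?_⟩
        have : 1/((N:ℝ)+2) ≤ 1/((N:ℝ)+1) := by
          apply one_div_le_one_div_of_le (by positivity); linarith
        have h1 := hmem.1
        linarith
      · exact ⟨0, fun hmem => hs hmem.2⟩
    have hSmeasure : Filter.Tendsto (fun n => volume (S n)) Filter.atTop (nhds 0) := by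
      have := MeasureTheory.tendsto_measure_iInter_atTop
        (fun n => (hSmeas n).nullMeasurableSet) hSanti ⟨0, ne_of_lt (hSvol 0)⟩
      rw [hSempty] at this
      simpa [Function.comp_def] using this
    have hSreal : Filter.Tendsto (fun n => (volume (S n)).toReal) Filter.atTop (nhds 0) := by
      have h0 : ((0:ENNReal)).toReal = 0 := by simp
      rw [← h0]
      exact (ENNReal.tendsto_toReal (by simp)).comp hSmeasure
    have hbnd : ∀ n, ‖∫ p in disk, (pdx (cutoff n) p * F1 p + pdy (cutoff n) p * F2 p)‖
        ≤ C * (volume (S n)).toReal := by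
      intro n
      have hcont : Continuous (fun p => pdx (cutoff n) p * F1 p + pdy (cutoff n) p * F2 p) :=
        ((continuous_pdx (contDiff_cutoff n)).mul h1.continuous).add
          ((continuous_pdy (contDiff_cutoff n)).mul h2.continuous)
      have hindint : Integrable (Set.indicator (S n) (fun _ => C))
          (volume.restrict disk) := by
        rw [MeasureTheory.integrable_indicator_iff (hSmeas n)]
        exact MeasureTheory.integrableOn_const
          (ne_of_lt (lt_of_le_of_lt (MeasureTheory.Measure.restrict_apply_le _ _) (hSvol n)))
      calc ‖∫ p in disk, (pdx (cutoff n) p * F1 p + pdy (cutoff n) p * F2 p)‖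
          ≤ ∫ p in disk, ‖pdx (cutoff n) p * F1 p + pdy (cutoff n) p * F2 p‖ :=
            MeasureTheory.norm_integral_le_integral_norm _
      _ ≤ ∫ p in disk, Set.indicator (S n) (fun _ => C) p := by
          apply MeasureTheory.integral_mono (integrableOn_disk hcont).norm hindint
          intro p
          simpa [Real.norm_eq_abs] using hgbound n p
      _ ≤ C * (volume (S n)).toReal := by
          rw [MeasureTheory.integral_indicator_const _ (hSmeas n), smul_eq_mul,
            MeasureTheory.measureReal_def, MeasureTheory.Measure.restrict_apply (hSmeas n)]
          rw [mul_comm]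
          apply mul_le_mul_of_nonneg_left _ hC0
          apply ENNReal.toReal_mono (ne_of_lt (hSvol n))
          exact measure_mono Set.inter_subset_left
    have hlim : Filter.Tendsto (fun n => C * (volume (S n)).toReal) Filter.atTop (nhds 0) := by
      simpa using hSreal.const_mul C
    exact squeeze_zero_norm hbnd hlim
  have hfin : Filter.Tendsto (fun n => ∫ p in disk, cutoff n p * (pdx F1 p + pdy F2 p))
      Filter.atTop (nhds 0) := by
    have := htendB.neg
    simp only [neg_zero] at this
    exact Filter.Tendsto.congr (fun n => (hA n).symm) this
  exact tendsto_nhds_unique htendA hfin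

/-! ### Pointwise calculus algebra -/

section Algebra

variable {f g h : ℝ×ℝ → ℝ}

lemma pdx_add (hf : ContDiff ℝ (⊤:ℕ∞) f) (hg : ContDiff ℝ (⊤:ℕ∞) g) :
    pdx (fun q => f q + g q) = fun q => pdx f q + pdx g q := by
  rw [pdx_eq (hf.add hg), dd_add _ (hf.differentiable (by simp))
    (hg.differentiable (by simp)), ← pdx_eq hf, ← pdx_eq hg]

lemma pdy_add (hf : ContDiff ℝ (⊤:ℕ∞) f) (hg : ContDiff ℝ (⊤:ℕ∞) g) :
    pdy (fun q => f q + g q) = fun q => pdy f q + pdy g q := by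
  rw [pdy_eq (hf.add hg), dd_add _ (hf.differentiable (by simp))
    (hg.differentiable (by simp)), ← pdy_eq hf, ← pdy_eq hg]

lemma pdx_sub (hf : ContDiff ℝ (⊤:ℕ∞) f) (hg : ContDiff ℝ (⊤:ℕ∞) g) :
    pdx (fun q => f q - g q) = fun q => pdx f q - pdx g q := by
  rw [pdx_eq (hf.sub hg), dd_sub _ (hf.differentiable (by simp))
    (hg.differentiable (by simp)), ← pdx_eq hf, ← pdx_eq hg]

lemma pdy_sub (hf : ContDiff ℝ (⊤:ℕ∞) f) (hg : ContDiff ℝ (⊤:ℕ∞) g) :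
    pdy (fun q => f q - g q) = fun q => pdy f q - pdy g q := by
  rw [pdy_eq (hf.sub hg), dd_sub _ (hf.differentiable (by simp))
    (hg.differentiable (by simp)), ← pdy_eq hf, ← pdy_eq hg]

lemma pdx_const_mul (c : ℝ) (hf : ContDiff ℝ (⊤:ℕ∞) f) :
    pdx (fun q => c * f q) = fun q => c * pdx f q := by
  rw [pdx_eq (contDiff_const.mul hf), dd_const_mul _ c
    (hf.differentiable (by simp)), ← pdx_eq hf]

lemma pdy_const_mul (c : ℝ) (hf : ContDiff ℝ (⊤:ℕ∞) f) :
    pdy (fun q => c * f q) = fun q => c * pdy f q := by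
  rw [pdy_eq (contDiff_const.mul hf), dd_const_mul _ c
    (hf.differentiable (by simp)), ← pdy_eq hf]

lemma pdx_pdy_comm (hf : ContDiff ℝ (⊤:ℕ∞) f) : pdx (pdy f) = pdy (pdx f) := by
  rw [pdx_eq (contDiff_pdy hf), pdy_eq hf, pdy_eq (contDiff_pdx hf), pdx_eq hf]
  exact dd_comm _ _ hf

lemma lap_sub (hf : ContDiff ℝ (⊤:ℕ∞) f) (hg : ContDiff ℝ (⊤:ℕ∞) g) :
    lap (fun q => f q - g q) = fun q => lap f q - lap g q := by
  funext p
  show pdx (pdx fun q => f q - g q) p + pdy (pdy fun q => f q - g q) p = _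
  rw [pdx_sub hf hg, pdy_sub hf hg, pdx_sub (contDiff_pdx hf) (contDiff_pdx hg),
    pdy_sub (contDiff_pdy hf) (contDiff_pdy hg)]
  show pdx (pdx f) p - pdx (pdx g) p + (pdy (pdy f) p - pdy (pdy g) p)
    = (pdx (pdx f) p + pdy (pdy f) p) - (pdx (pdx g) p + pdy (pdy g) p)
  ring

lemma lap_const_mul (c : ℝ) (hf : ContDiff ℝ (⊤:ℕ∞) f) :
    lap (fun q => c * f q) = fun q => c * lap f q := by
  funext p
  show pdx (pdx fun q => c * f q) p + pdy (pdy fun q => c * f q) p = _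
  rw [pdx_const_mul c hf, pdy_const_mul c hf, pdx_const_mul c (contDiff_pdx hf),
    pdy_const_mul c (contDiff_pdy hf)]
  show c * pdx (pdx f) p + c * pdy (pdy f) p = c * (pdx (pdx f) p + pdy (pdy f) p)
  ring

lemma pdx_coord_fst (p : ℝ×ℝ) : pdx (fun q : ℝ×ℝ => q.1) p = 1 := by
  show deriv (fun x : ℝ => x) p.1 = 1
  simp

lemma pdx_coord_snd (p : ℝ×ℝ) : pdx (fun q : ℝ×ℝ => q.2) p = 0 := by
  show deriv (fun _ : ℝ => p.2) p.1 = 0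
  simp

lemma pdy_coord_fst (p : ℝ×ℝ) : pdy (fun q : ℝ×ℝ => q.1) p = 0 := by
  show deriv (fun _ : ℝ => p.1) p.2 = 0
  simp

lemma pdy_coord_snd (p : ℝ×ℝ) : pdy (fun q : ℝ×ℝ => q.2) p = 1 := by
  show deriv (fun y : ℝ => y) p.2 = 1
  simp

lemma contDiff_coord_fst : ContDiff ℝ (⊤:ℕ∞) (fun q : ℝ×ℝ => q.1) := contDiff_fst
lemma contDiff_coord_snd : ContDiff ℝ (⊤:ℕ∞) (fun q : ℝ×ℝ => q.2) := contDiff_snd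

lemma contDiff_azim (hf : ContDiff ℝ (⊤:ℕ∞) f) : ContDiff ℝ (⊤:ℕ∞) (azim f) := by
  have : azim f = fun p => p.1 * pdy f p - p.2 * pdx f p := rfl
  rw [this]
  exact (contDiff_fst.mul (contDiff_pdy hf)).sub (contDiff_snd.mul (contDiff_pdx hf))

lemma continuous_azim (hf : ContDiff ℝ (⊤:ℕ∞) f) : Continuous (azim f) :=
  (contDiff_azim hf).continuous

lemma contDiff_jac (hf : ContDiff ℝ (⊤:ℕ∞) f) (hg : ContDiff ℝ (⊤:ℕ∞) g) :
    ContDiff ℝ (⊤:ℕ∞) (jac f g) := by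
  have : jac f g = fun p => pdx f p * pdy g p - pdy f p * pdx g p := rfl
  rw [this]
  exact ((contDiff_pdx hf).mul (contDiff_pdy hg)).sub ((contDiff_pdy hf).mul (contDiff_pdx hg))

end Algebra

/-! ### Green identities on the disk -/

section Green

variable {u v f g h : ℝ×ℝ → ℝ}

lemma pdx_neg (hf : ContDiff ℝ (⊤:ℕ∞) f) :
    pdx (fun q => -(f q)) = fun q => -(pdx f q) := by
  have e : (fun q => -(f q)) = fun q => (-1:ℝ) * f q := by funext q; ring
  rw [e, pdx_const_mul (-1) hf]
  funext q; ring

lemma pdy_neg (hf : ContDiff ℝ (⊤:ℕ∞) f) :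
    pdy (fun q => -(f q)) = fun q => -(pdy f q) := by
  have e : (fun q => -(f q)) = fun q => (-1:ℝ) * f q := by funext q; ring
  rw [e, pdy_const_mul (-1) hf]
  funext q; ring

/-- Green's identity I : `∫ v Δu = -∫ ∇u·∇v` when `v` vanishes on the circle. -/
lemma green1 (hu : ContDiff ℝ (⊤:ℕ∞) u) (hv : ContDiff ℝ (⊤:ℕ∞) v)
    (hbv : ∀ p ∈ bdry, v p = 0) :
    ∫ p in disk, v p * lap u p
      = - ∫ p in disk, (pdx u p * pdx v p + pdy u p * pdy v p) := by
  have hdiv := div_disk (fun q => v q * pdx u q) (fun q => v q * pdy u q)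
    (hv.mul (contDiff_pdx hu)) (hv.mul (contDiff_pdy hu))
    (fun p hp => ⟨by show v p * pdx u p = 0; rw [hbv p hp, zero_mul],
      by show v p * pdy u p = 0; rw [hbv p hp, zero_mul]⟩)
  have hpt : ∀ p ∈ disk,
      pdx (fun q => v q * pdx u q) p + pdy (fun q => v q * pdy u q) p
      = v p * lap u p + (pdx u p * pdx v p + pdy u p * pdy v p) := by
    intro p _
    rw [congrFun (pdx_mul hv (contDiff_pdx hu)) p, congrFun (pdy_mul hv (contDiff_pdy hu)) p]
    show _ = v p * (pdx (pdx u) p + pdy (pdy u) p) + _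
    ring
  rw [MeasureTheory.setIntegral_congr_fun measurableSet_disk hpt,
    MeasureTheory.integral_add (integrableOn_disk (hv.continuous.fun_mul (continuous_lap hu)))
      (integrableOn_disk (((continuous_pdx hu).fun_mul (continuous_pdx hv)).fun_add
        ((continuous_pdy hu).fun_mul (continuous_pdy hv))))] at hdiv
  linarith

/-- Green's identity II : `∫ u Δv = ∫ v Δu` when `u` vanishes on the circle and either `v`
or `∇u` also vanishes there. -/
lemma green2 (hu : ContDiff ℝ (⊤:ℕ∞) u) (hv : ContDiff ℝ (⊤:ℕ∞) v)
    (hbu : ∀ p ∈ bdry, u p = 0)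
    (hside : ∀ p ∈ bdry, v p = 0 ∨ (pdx u p = 0 ∧ pdy u p = 0)) :
    ∫ p in disk, u p * lap v p = ∫ p in disk, v p * lap u p := by
  have hdiv := div_disk (fun q => u q * pdx v q - v q * pdx u q)
    (fun q => u q * pdy v q - v q * pdy u q)
    ((hu.mul (contDiff_pdx hv)).sub (hv.mul (contDiff_pdx hu)))
    ((hu.mul (contDiff_pdy hv)).sub (hv.mul (contDiff_pdy hu)))
    (fun p hp => by
      constructor
      · show u p * pdx v p - v p * pdx u p = 0
        rcases hside p hp with hcase | hcase
        · rw [hbu p hp, hcase]; ring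
        · rw [hbu p hp, hcase.1]; ring
      · show u p * pdy v p - v p * pdy u p = 0
        rcases hside p hp with hcase | hcase
        · rw [hbu p hp, hcase]; ring
        · rw [hbu p hp, hcase.2]; ring)
  have hpt : ∀ p ∈ disk,
      pdx (fun q => u q * pdx v q - v q * pdx u q) p
        + pdy (fun q => u q * pdy v q - v q * pdy u q) p
      = u p * lap v p - v p * lap u p := by
    intro p _
    rw [congrFun (pdx_sub (hu.mul (contDiff_pdx hv)) (hv.mul (contDiff_pdx hu))) p,
      congrFun (pdy_sub (hu.mul (contDiff_pdy hv)) (hv.mul (contDiff_pdy hu))) p,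
      congrFun (pdx_mul hu (contDiff_pdx hv)) p, congrFun (pdx_mul hv (contDiff_pdx hu)) p,
      congrFun (pdy_mul hu (contDiff_pdy hv)) p, congrFun (pdy_mul hv (contDiff_pdy hu)) p]
    show _ = u p * (pdx (pdx v) p + pdy (pdy v) p) - v p * (pdx (pdx u) p + pdy (pdy u) p)
    ring
  rw [MeasureTheory.setIntegral_congr_fun measurableSet_disk hpt,
    MeasureTheory.integral_sub (integrableOn_disk (hu.continuous.fun_mul (continuous_lap hv)))
      (integrableOn_disk (hv.continuous.fun_mul (continuous_lap hu)))] at hdiv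
  linarith

/-- Skew-symmetry of the azimuthal derivative : `∫ (f_θ g + f g_θ) = 0` when `f g` vanishes
on the circle. -/
lemma azim_skew (hf : ContDiff ℝ (⊤:ℕ∞) f) (hg : ContDiff ℝ (⊤:ℕ∞) g)
    (hb : ∀ p ∈ bdry, f p * g p = 0) :
    ∫ p in disk, (azim f p * g p + f p * azim g p) = 0 := by
  have hdiv := div_disk (fun q => -(q.2 * (f q * g q))) (fun q => q.1 * (f q * g q))
    ((contDiff_snd.mul (hf.mul hg)).neg) (contDiff_fst.mul (hf.mul hg))
    (fun p hp => by
      constructor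
      · show -(p.2 * (f p * g p)) = 0
        rw [hb p hp]; ring
      · show p.1 * (f p * g p) = 0
        rw [hb p hp]; ring)
  have hpt : ∀ p ∈ disk,
      pdx (fun q => -(q.2 * (f q * g q))) p + pdy (fun q => q.1 * (f q * g q)) p
      = azim f p * g p + f p * azim g p := by
    intro p _
    rw [congrFun (pdx_neg (contDiff_snd.mul (hf.mul hg))) p,
      congrFun (pdx_mul contDiff_coord_snd (hf.mul hg)) p,
      congrFun (pdy_mul contDiff_coord_fst (hf.mul hg)) p,
      congrFun (pdx_mul hf hg) p, congrFun (pdy_mul hf hg) p,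
      pdx_coord_snd, pdy_coord_fst]
    show _ = (p.1 * pdy f p - p.2 * pdx f p) * g p + f p * (p.1 * pdy g p - p.2 * pdx g p)
    ring
  rw [MeasureTheory.setIntegral_congr_fun measurableSet_disk hpt] at hdiv
  exact hdiv

/-- `∫ J(f,h) = 0` when `h` vanishes on the circle. -/
lemma jac_int_zero (hf : ContDiff ℝ (⊤:ℕ∞) f) (hh : ContDiff ℝ (⊤:ℕ∞) h)
    (hbh : ∀ p ∈ bdry, h p = 0) :
    ∫ p in disk, jac f h p = 0 := by
  have hdiv := div_disk (fun q => -(h q * pdy f q)) (fun q => h q * pdx f q)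
    ((hh.mul (contDiff_pdy hf)).neg) (hh.mul (contDiff_pdx hf))
    (fun p hp => by
      constructor
      · show -(h p * pdy f p) = 0
        rw [hbh p hp]; ring
      · show h p * pdx f p = 0
        rw [hbh p hp]; ring)
  have hpt : ∀ p ∈ disk,
      pdx (fun q => -(h q * pdy f q)) p + pdy (fun q => h q * pdx f q) p = jac f h p := by
    intro p _
    rw [congrFun (pdx_neg (hh.mul (contDiff_pdy hf))) p,
      congrFun (pdx_mul hh (contDiff_pdy hf)) p,
      congrFun (pdy_mul hh (contDiff_pdx hf)) p,
      congrFun (pdx_pdy_comm hf) p]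
    show _ = pdx f p * pdy h p - pdy f p * pdx h p
    ring
  rw [MeasureTheory.setIntegral_congr_fun measurableSet_disk hpt] at hdiv
  exact hdiv

/-- `∫ J(g,h) = 0` when `g` vanishes on the circle. -/
lemma jac_int_zero' (hg : ContDiff ℝ (⊤:ℕ∞) g) (hh : ContDiff ℝ (⊤:ℕ∞) h)
    (hbg : ∀ p ∈ bdry, g p = 0) :
    ∫ p in disk, jac g h p = 0 := by
  have := jac_int_zero hh hg hbg
  have hpt : ∀ p ∈ disk, jac g h p = - jac h g p := by
    intro p _
    show pdx g p * pdy h p - pdy g p * pdx h p = -(pdx h p * pdy g p - pdy h p * pdx g p)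
    ring
  rw [MeasureTheory.setIntegral_congr_fun measurableSet_disk hpt,
    MeasureTheory.integral_neg, this, neg_zero]

/-- `∫ J(f,g) g = 0` when `g` vanishes on the circle. -/
lemma jac_self (hf : ContDiff ℝ (⊤:ℕ∞) f) (hg : ContDiff ℝ (⊤:ℕ∞) g)
    (hbg : ∀ p ∈ bdry, g p = 0) :
    ∫ p in disk, jac f g p * g p = 0 := by
  have h2 : ∫ p in disk, jac f (fun q => g q * g q) p = 0 :=
    jac_int_zero hf (hg.mul hg) (fun p hp => by rw [hbg p hp, zero_mul])
  have hpt : ∀ p ∈ disk, jac f (fun q => g q * g q) p = 2 * (jac f g p * g p) := by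
    intro p _
    show pdx f p * pdy (fun q => g q * g q) p - pdy f p * pdx (fun q => g q * g q) p = _
    rw [congrFun (pdx_mul hg hg) p, congrFun (pdy_mul hg hg) p]
    show _ = 2 * ((pdx f p * pdy g p - pdy f p * pdx g p) * g p)
    ring
  rw [MeasureTheory.setIntegral_congr_fun measurableSet_disk hpt,
    MeasureTheory.integral_const_mul] at h2
  linarith

end Green

/-! ### The azimuthal derivative commutes with the Laplacian -/

lemma lap_azim {f : ℝ×ℝ → ℝ} (hf : ContDiff ℝ (⊤:ℕ∞) f) : lap (azim f) = azim (lap f) := by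
  have hpx := contDiff_pdx hf
  have hpy := contDiff_pdy hf
  have hpxy := contDiff_pdx hpy
  have hpxx := contDiff_pdx hpx
  have hpyy := contDiff_pdy hpy
  have hpyx := contDiff_pdy hpx
  have eaz : azim f = fun q => q.1 * pdy f q - q.2 * pdx f q := rfl
  have A1 : pdx (azim f) = fun p => pdy f p + p.1 * pdx (pdy f) p - p.2 * pdx (pdx f) p := by
    rw [eaz, pdx_sub (contDiff_coord_fst.mul hpy) (contDiff_coord_snd.mul hpx)]
    funext p
    rw [congrFun (pdx_mul contDiff_coord_fst hpy) p,
      congrFun (pdx_mul contDiff_coord_snd hpx) p, pdx_coord_fst, pdx_coord_snd]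
    ring
  have A2 : pdy (azim f) = fun p => p.1 * pdy (pdy f) p - pdx f p - p.2 * pdy (pdx f) p := by
    rw [eaz, pdy_sub (contDiff_coord_fst.mul hpy) (contDiff_coord_snd.mul hpx)]
    funext p
    rw [congrFun (pdy_mul contDiff_coord_fst hpy) p,
      congrFun (pdy_mul contDiff_coord_snd hpx) p, pdy_coord_fst, pdy_coord_snd]
    ring
  funext p
  show pdx (pdx (azim f)) p + pdy (pdy (azim f)) p = _
  rw [A1, A2]
  rw [congrFun (pdx_sub (hpy.add (contDiff_coord_fst.mul hpxy))
    (contDiff_coord_snd.mul hpxx)) p]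
  rw [congrFun (pdx_add hpy (contDiff_coord_fst.mul hpxy)) p]
  rw [congrFun (pdx_mul contDiff_coord_fst hpxy) p,
    congrFun (pdx_mul contDiff_coord_snd hpxx) p, pdx_coord_fst, pdx_coord_snd]
  rw [congrFun (pdy_sub ((contDiff_coord_fst.mul hpyy).sub hpx)
    (contDiff_coord_snd.mul hpyx)) p]
  rw [congrFun (pdy_sub (contDiff_coord_fst.mul hpyy) hpx) p]
  rw [congrFun (pdy_mul contDiff_coord_fst hpyy) p,
    congrFun (pdy_mul contDiff_coord_snd hpyx) p, pdy_coord_fst, pdy_coord_snd]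
  show _ = p.1 * pdy (lap f) p - p.2 * pdx (lap f) p
  rw [show lap f = fun q => pdx (pdx f) q + pdy (pdy f) q from rfl,
    pdx_add hpxx hpyy, pdy_add hpxx hpyy]
  simp only []
  rw [pdx_pdy_comm hf, congrFun (pdx_pdy_comm hpx) p, congrFun (pdx_pdy_comm hpy) p,
    pdx_pdy_comm hf]
  ring

/-! ### The energy derivative identity -/

lemma split_add {f g : ℝ×ℝ → ℝ} (hf : Continuous f) (hg : Continuous g) :
    ∫ p in disk, (f p + g p) = (∫ p in disk, f p) + ∫ p in disk, g p :=
  MeasureTheory.integral_add (integrableOn_disk hf) (integrableOn_disk hg)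

lemma split_sub {f g : ℝ×ℝ → ℝ} (hf : Continuous f) (hg : Continuous g) :
    ∫ p in disk, (f p - g p) = (∫ p in disk, f p) - ∫ p in disk, g p :=
  MeasureTheory.integral_sub (integrableOn_disk hf) (integrableOn_disk hg)

lemma split_smul (c : ℝ) (f : ℝ×ℝ → ℝ) :
    ∫ p in disk, c * f p = c * ∫ p in disk, f p :=
  MeasureTheory.integral_const_mul c f

lemma icongr {f g : ℝ×ℝ → ℝ} (h : ∀ p ∈ disk, f p = g p) :
    ∫ p in disk, f p = ∫ p in disk, g p :=
  MeasureTheory.setIntegral_congr_fun measurableSet_disk h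

lemma partA (ε R : ℝ) (a adot b : ℝ×ℝ → ℝ)
    (ha : ContDiff ℝ (⊤:ℕ∞) a) (hadot : ContDiff ℝ (⊤:ℕ∞) adot) (hb : ContDiff ℝ (⊤:ℕ∞) b)
    (hba : ∀ p ∈ bdry, a p = 0)
    (e1 : ∀ p ∈ disk, adot p - ε * lap adot p
      = (1/R) * lap a p + R * azim b p + jac b (fun q => a q - ε * lap a q) p) :
    ∫ p in disk, (a p * adot p + ε * (pdx a p * pdx adot p + pdy a p * pdy adot p))
      = (1/R) * (∫ p in disk, a p * lap a p)
        + R * (∫ p in disk, azim b p * a p)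
        - ε * (∫ p in disk, jac b (lap a) p * a p) := by
  have hlapa := contDiff_lap ha
  have hlapadot := contDiff_lap hadot
  have hclapa := continuous_lap ha
  have hclapadot := continuous_lap hadot
  have hgrad : Continuous (fun p => pdx a p * pdx adot p + pdy a p * pdy adot p) :=
    ((continuous_pdx ha).mul (continuous_pdx hadot)).add
      ((continuous_pdy ha).mul (continuous_pdy hadot))
  have g1 : ∫ p in disk, a p * lap adot p
      = - ∫ p in disk, (pdx adot p * pdx a p + pdy adot p * pdy a p) :=
    green1 hadot ha hba
  have hjacphi : ∀ p ∈ disk, jac b (fun q => a q - ε * lap a q) p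
      = jac b a p - ε * jac b (lap a) p := by
    intro p _
    show pdx b p * pdy (fun q => a q - ε * lap a q) p
      - pdy b p * pdx (fun q => a q - ε * lap a q) p = _
    rw [congrFun (pdx_sub ha (contDiff_const.mul hlapa)) p,
      congrFun (pdy_sub ha (contDiff_const.mul hlapa)) p,
      congrFun (pdx_const_mul ε hlapa) p, congrFun (pdy_const_mul ε hlapa) p]
    show _ = (pdx b p * pdy a p - pdy b p * pdx a p)
      - ε * (pdx b p * pdy (lap a) p - pdy b p * pdx (lap a) p)
    ring
  have hjs : ∫ p in disk, jac b a p * a p = 0 := jac_self hb ha hba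
  calc ∫ p in disk, (a p * adot p + ε * (pdx a p * pdx adot p + pdy a p * pdy adot p))
      = (∫ p in disk, a p * adot p)
        + ε * ∫ p in disk, (pdx a p * pdx adot p + pdy a p * pdy adot p) := by
        rw [← split_smul, split_add (ha.continuous.fun_mul hadot.continuous)
          (continuous_const.fun_mul hgrad)]
  _ = (∫ p in disk, a p * adot p) - ε * ∫ p in disk, a p * lap adot p := by
        have horient : ∫ p in disk, (pdx a p * pdx adot p + pdy a p * pdy adot p)
            = ∫ p in disk, (pdx adot p * pdx a p + pdy adot p * pdy a p) :=
          icongr (fun p _ => by ring)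
        rw [horient, g1]
        ring
  _ = ∫ p in disk, (adot p - ε * lap adot p) * a p := by
        rw [icongr (f := fun p => (adot p - ε * lap adot p) * a p)
          (g := fun p => a p * adot p - ε * (a p * lap adot p)) (fun p _ => by ring),
          split_sub (ha.continuous.fun_mul hadot.continuous)
            (continuous_const.fun_mul (ha.continuous.fun_mul hclapadot)), ← split_smul]
  _ = ∫ p in disk, ((1/R) * lap a p + R * azim b p
        + jac b (fun q => a q - ε * lap a q)  p) * a p := by
        exact icongr (fun p hp => by rw [e1 p hp])
  _ = ∫ p in disk, ((1/R) * (a p * lap a p) + R * (azim b p * a p)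
        + (jac b a p * a p - ε * (jac b (lap a) p * a p))) := by
        apply icongr
        intro p hp
        rw [hjacphi p hp]
        ring
  _ = (1/R) * (∫ p in disk, a p * lap a p)
        + R * (∫ p in disk, azim b p * a p)
        - ε * (∫ p in disk, jac b (lap a) p * a p) := by
        have c1 : Continuous (fun p => (1/R) * (a p * lap a p)) :=
          continuous_const.mul (ha.continuous.mul hclapa)
        have c2 : Continuous (fun p => R * (azim b p * a p)) :=
          continuous_const.mul ((continuous_azim hb).mul ha.continuous)
        have c3 : Continuous (fun p => jac b a p * a p) :=
          (contDiff_jac hb ha).continuous.mul ha.continuous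
        have c4 : Continuous (fun p => ε * (jac b (lap a) p * a p)) :=
          continuous_const.mul ((contDiff_jac hb hlapa).continuous.mul ha.continuous)
        rw [split_add (c1.fun_add c2) (c3.fun_sub c4), split_add c1 c2, split_sub c3 c4,
          split_smul, split_smul, split_smul, hjs]
        ring

lemma partB (ε R : ℝ) (a b bdot : ℝ×ℝ → ℝ)
    (ha : ContDiff ℝ (⊤:ℕ∞) a) (hb : ContDiff ℝ (⊤:ℕ∞) b) (hbdot : ContDiff ℝ (⊤:ℕ∞) bdot)
    (hba : ∀ p ∈ bdry, a p = 0) (hbb : ∀ p ∈ bdry, b p = 0)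
    (hbbx : ∀ p ∈ bdry, pdx b p = 0) (hbby : ∀ p ∈ bdry, pdy b p = 0)
    (e2 : ∀ p ∈ disk, ε * lap (lap bdot) p - lap bdot p
      = -(1/R) * lap (lap b) p + ε * R * lap (azim a) p
        + jac (fun q => lap b q - ε * lap (lap b) q) b p + ε * jac (lap a) a p) :
    ∫ p in disk, (pdx b p * pdx bdot p + pdy b p * pdy bdot p + ε * (lap b p * lap bdot p))
      = -(1/R) * (∫ p in disk, (lap b p)^2)
        - ε * R * (∫ p in disk, azim b p * lap a p)
        + ε * (∫ p in disk, jac (lap a) a p * b p) := by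
  have hlapa := contDiff_lap ha
  have hlapb := contDiff_lap hb
  have hlapbdot := contDiff_lap hbdot
  have hside : ∀ p ∈ bdry, ∀ v : ℝ×ℝ → ℝ, v p = 0 ∨ (pdx b p = 0 ∧ pdy b p = 0) :=
    fun p hp _ => Or.inr ⟨hbbx p hp, hbby p hp⟩
  -- LHS reduction
  have B1 : ∫ p in disk, b p * lap bdot p
      = - ∫ p in disk, (pdx bdot p * pdx b p + pdy bdot p * pdy b p) :=
    green1 hbdot hb hbb
  have B2 : ∫ p in disk, b p * lap (lap bdot) p = ∫ p in disk, lap bdot p * lap b p :=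
    green2 hb hlapbdot hbb (fun p hp => Or.inr ⟨hbbx p hp, hbby p hp⟩)
  have C1 : ∫ p in disk, b p * lap (lap b) p = ∫ p in disk, lap b p * lap b p :=
    green2 hb hlapb hbb (fun p hp => Or.inr ⟨hbbx p hp, hbby p hp⟩)
  -- the rotation term
  have c2a : ∫ p in disk, b p * lap (azim a) p = ∫ p in disk, azim a p * lap b p :=
    green2 hb (contDiff_azim ha) hbb (fun p hp => Or.inr ⟨hbbx p hp, hbby p hp⟩)
  have c2b : ∫ p in disk, (azim a p * lap b p + a p * azim (lap b) p) = 0 :=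
    azim_skew ha hlapb (fun p hp => by rw [hba p hp, zero_mul])
  have hazb : ∀ p ∈ bdry, azim b p = 0 := by
    intro p hp
    show p.1 * pdy b p - p.2 * pdx b p = 0
    rw [hbbx p hp, hbby p hp]
    ring
  have c2d : ∫ p in disk, azim b p * lap a p = ∫ p in disk, a p * lap (azim b) p :=
    green2 (contDiff_azim hb) ha hazb (fun p hp => Or.inl (hba p hp))
  have C2 : ∫ p in disk, lap (azim a) p * b p = - ∫ p in disk, azim b p * lap a p := by
    have o1 : ∫ p in disk, lap (azim a) p * b p = ∫ p in disk, b p * lap (azim a) p :=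
      icongr (fun p _ => by ring)
    have s1 : ∫ p in disk, azim a p * lap b p = - ∫ p in disk, a p * azim (lap b) p := by
      have := split_add ((continuous_azim ha).fun_mul (continuous_lap hb))
        (ha.continuous.fun_mul (continuous_azim hlapb))
      rw [c2b] at this
      linarith
    have s2 : ∫ p in disk, a p * azim (lap b) p = ∫ p in disk, a p * lap (azim b) p := by
      rw [lap_azim hb]
    rw [o1, c2a, s1, s2, ← c2d]
  -- the nonlinear term with χ
  have C3 : ∫ p in disk, jac (fun q => lap b q - ε * lap (lap b) q) b p * b p = 0 :=
    jac_self (hlapb.sub (contDiff_const.mul (contDiff_lap hlapb))) hb hbb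
  -- continuity packages
  have cgrad : Continuous (fun p => pdx b p * pdx bdot p + pdy b p * pdy bdot p) :=
    ((continuous_pdx hb).mul (continuous_pdx hbdot)).add
      ((continuous_pdy hb).mul (continuous_pdy hbdot))
  have claplap : Continuous (lap (lap bdot)) := continuous_lap hlapbdot
  calc ∫ p in disk, (pdx b p * pdx bdot p + pdy b p * pdy bdot p + ε * (lap b p * lap bdot p))
      = (∫ p in disk, (pdx b p * pdx bdot p + pdy b p * pdy bdot p))
        + ε * ∫ p in disk, lap b p * lap bdot p := by
        rw [← split_smul, split_add cgrad
          (continuous_const.fun_mul ((continuous_lap hb).fun_mul (continuous_lap hbdot)))]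
  _ = - (∫ p in disk, b p * lap bdot p) + ε * ∫ p in disk, b p * lap (lap bdot) p := by
        have o1 : ∫ p in disk, (pdx b p * pdx bdot p + pdy b p * pdy bdot p)
            = ∫ p in disk, (pdx bdot p * pdx b p + pdy bdot p * pdy b p) :=
          icongr (fun p _ => by ring)
        have o2 : ∫ p in disk, lap b p * lap bdot p = ∫ p in disk, lap bdot p * lap b p :=
          icongr (fun p _ => by ring)
        rw [o1, o2, ← B2]
        have := B1
        linarith
  _ = ∫ p in disk, (ε * lap (lap bdot) p - lap bdot p) * b p := by
        rw [icongr (f := fun p => (ε * lap (lap bdot) p - lap bdot p) * b p)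
          (g := fun p => ε * (b p * lap (lap bdot) p) - b p * lap bdot p) (fun p _ => by ring),
          split_sub (continuous_const.fun_mul (hb.continuous.fun_mul claplap))
            (hb.continuous.fun_mul (continuous_lap hbdot)), ← split_smul]
        ring
  _ = ∫ p in disk, (-(1/R) * lap (lap b) p + ε * R * lap (azim a) p
        + jac (fun q => lap b q - ε * lap (lap b) q) b p + ε * jac (lap a) a p) * b p :=
        icongr (fun p hp => by rw [e2 p hp])
  _ = ∫ p in disk, (-(1/R) * (b p * lap (lap b) p) + ε * R * (lap (azim a) p * b p)
        + jac (fun q => lap b q - ε * lap (lap b) q) b p * b p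
        + ε * (jac (lap a) a p * b p)) :=
        icongr (fun p _ => by ring)
  _ = -(1/R) * (∫ p in disk, b p * lap (lap b) p)
        + ε * R * (∫ p in disk, lap (azim a) p * b p)
        + (∫ p in disk, jac (fun q => lap b q - ε * lap (lap b) q) b p * b p)
        + ε * (∫ p in disk, jac (lap a) a p * b p) := by
        have d1 : Continuous (fun p => -(1/R) * (b p * lap (lap b) p)) :=
          continuous_const.mul (hb.continuous.mul (continuous_lap hlapb))
        have d2 : Continuous (fun p => ε * R * (lap (azim a) p * b p)) :=
          continuous_const.mul ((continuous_lap (contDiff_azim ha)).mul hb.continuous)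
        have d3 : Continuous (fun p => jac (fun q => lap b q - ε * lap (lap b) q) b p * b p) :=
          (contDiff_jac (hlapb.sub (contDiff_const.mul (contDiff_lap hlapb))) hb).continuous.mul
            hb.continuous
        have d4 : Continuous (fun p => ε * (jac (lap a) a p * b p)) :=
          continuous_const.mul ((contDiff_jac hlapa ha).continuous.mul hb.continuous)
        rw [split_add ((d1.fun_add d2).fun_add d3) d4, split_add (d1.fun_add d2) d3, split_add d1 d2,
          split_smul, split_smul, split_smul]
  _ = -(1/R) * (∫ p in disk, (lap b p)^2)
        - ε * R * (∫ p in disk, azim b p * lap a p)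
        + ε * (∫ p in disk, jac (lap a) a p * b p) := by
        rw [C1, C2, C3, icongr (f := fun p => lap b p * lap b p)
          (g := fun p => (lap b p)^2) (fun p _ => by ring)]
        ring

lemma energy_identity (ε R : ℝ) (a adot b bdot : ℝ×ℝ → ℝ)
    (ha : ContDiff ℝ (⊤:ℕ∞) a) (hadot : ContDiff ℝ (⊤:ℕ∞) adot)
    (hb : ContDiff ℝ (⊤:ℕ∞) b) (hbdot : ContDiff ℝ (⊤:ℕ∞) bdot)
    (hba : ∀ p ∈ bdry, a p = 0) (hbb : ∀ p ∈ bdry, b p = 0)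
    (hbbx : ∀ p ∈ bdry, pdx b p = 0) (hbby : ∀ p ∈ bdry, pdy b p = 0)
    (e1 : ∀ p ∈ disk, adot p - ε * lap adot p
      = (1/R) * lap a p + R * azim b p + jac b (fun q => a q - ε * lap a q) p)
    (e2 : ∀ p ∈ disk, ε * lap (lap bdot) p - lap bdot p
      = -(1/R) * lap (lap b) p + ε * R * lap (azim a) p
        + jac (fun q => lap b q - ε * lap (lap b) q) b p + ε * jac (lap a) a p) :
    ∫ p in disk, ((a p * adot p + ε * (pdx a p * pdx adot p + pdy a p * pdy adot p))
      + (pdx b p * pdx bdot p + pdy b p * pdy bdot p + ε * (lap b p * lap bdot p)))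
    = -(1/R) * ((∫ p in disk, ((pdx a p)^2 + (pdy a p)^2)) + ∫ p in disk, (lap b p)^2)
      + R * ((∫ p in disk, azim b p * a p) - ε * ∫ p in disk, azim b p * lap a p) := by
  have hlapa := contDiff_lap ha
  have hA := partA ε R a adot b ha hadot hb hba e1
  have hB := partB ε R a b bdot ha hb hbdot hba hbb hbbx hbby e2
  -- gradient orientation
  have glap : ∫ p in disk, a p * lap a p = - ∫ p in disk, ((pdx a p)^2 + (pdy a p)^2) := by
    rw [green1 ha ha hba, icongr (f := fun p => pdx a p * pdx a p + pdy a p * pdy a p)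
      (g := fun p => (pdx a p)^2 + (pdy a p)^2) (fun p _ => by ring)]
  -- cancellation of the nonlinear terms
  have hz : ∫ p in disk, jac (fun q => a q * b q) (lap a) p = 0 :=
    jac_int_zero' (ha.mul hb) hlapa (fun p hp => by
      show a p * b p = 0
      rw [hba p hp, zero_mul])
  have hpt : ∀ p ∈ disk, jac (fun q => a q * b q) (lap a) p
      = jac b (lap a) p * a p + jac a (lap a) p * b p := by
    intro p _
    show pdx (fun q => a q * b q) p * pdy (lap a) p
      - pdy (fun q => a q * b q) p * pdx (lap a) p = _
    rw [congrFun (pdx_mul ha hb) p, congrFun (pdy_mul ha hb) p]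
    show _ = (pdx b p * pdy (lap a) p - pdy b p * pdx (lap a) p) * a p
      + (pdx a p * pdy (lap a) p - pdy a p * pdx (lap a) p) * b p
    ring
  have hsplitz : (∫ p in disk, jac b (lap a) p * a p)
      + ∫ p in disk, jac a (lap a) p * b p = 0 := by
    rw [← split_add ((contDiff_jac hb hlapa).continuous.fun_mul ha.continuous)
      ((contDiff_jac ha hlapa).continuous.fun_mul hb.continuous), ← icongr hpt]
    exact hz
  have hanti : ∫ p in disk, jac (lap a) a p * b p
      = - ∫ p in disk, jac a (lap a) p * b p := by
    rw [icongr (f := fun p => jac (lap a) a p * b p)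
      (g := fun p => -(jac a (lap a) p * b p)) (fun p _ => by
        show (pdx (lap a) p * pdy a p - pdy (lap a) p * pdx a p) * b p = _
        show _ = -((pdx a p * pdy (lap a) p - pdy a p * pdx (lap a) p) * b p)
        ring), MeasureTheory.integral_neg]
  have hsplitLHS := split_add
    (f := fun p => a p * adot p + ε * (pdx a p * pdx adot p + pdy a p * pdy adot p))
    (g := fun p => pdx b p * pdx bdot p + pdy b p * pdy bdot p + ε * (lap b p * lap bdot p))
    ((ha.continuous.mul hadot.continuous).add (continuous_const.mul
      (((continuous_pdx ha).mul (continuous_pdx hadot)).add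
        ((continuous_pdy ha).mul (continuous_pdy hadot)))))
    ((((continuous_pdx hb).mul (continuous_pdx hbdot)).add
      ((continuous_pdy hb).mul (continuous_pdy hbdot))).add
      (continuous_const.mul ((continuous_lap hb).mul (continuous_lap hbdot))))
  rw [hsplitLHS, hA, hB, glap, hanti]
  have h1 : (∫ p in disk, jac b (lap a) p * a p)
      = - ∫ p in disk, jac a (lap a) p * b p := by linarith
  rw [h1]
  ring

/-! ### Time slices, commutation, differentiation under the integral -/

/-- joint spatial Laplacian -/
def LL (F : ℝ×(ℝ×ℝ) → ℝ) : ℝ×(ℝ×ℝ) → ℝ := fun q => dX (dX F) q + dY (dY F) q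

lemma contDiff_dT {F : ℝ×(ℝ×ℝ) → ℝ} (hF : ContDiff ℝ (⊤:ℕ∞) F) :
    ContDiff ℝ (⊤:ℕ∞) (dT F) := contDiff_dd _ hF
lemma contDiff_dX {F : ℝ×(ℝ×ℝ) → ℝ} (hF : ContDiff ℝ (⊤:ℕ∞) F) :
    ContDiff ℝ (⊤:ℕ∞) (dX F) := contDiff_dd _ hF
lemma contDiff_dY {F : ℝ×(ℝ×ℝ) → ℝ} (hF : ContDiff ℝ (⊤:ℕ∞) F) :
    ContDiff ℝ (⊤:ℕ∞) (dY F) := contDiff_dd _ hF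

lemma contDiff_LL {F : ℝ×(ℝ×ℝ) → ℝ} (hF : ContDiff ℝ (⊤:ℕ∞) F) :
    ContDiff ℝ (⊤:ℕ∞) (LL F) :=
  (contDiff_dX (contDiff_dX hF)).add (contDiff_dY (contDiff_dY hF))

lemma lapslice {F : ℝ×(ℝ×ℝ) → ℝ} (hF : ContDiff ℝ (⊤:ℕ∞) F) (t : ℝ) :
    lap (fun p => F (t,p)) = fun p => LL F (t,p) := by
  funext p
  show pdx (pdx (fun q => F (t,q))) p + pdy (pdy (fun q => F (t,q))) p = _
  rw [pdx_tslice hF t, pdy_tslice hF t, pdx_tslice (contDiff_dX hF) t,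
    pdy_tslice (contDiff_dY hF) t]
  rfl

lemma hasDerivAt_tslice {F : ℝ×(ℝ×ℝ) → ℝ} (hF : ContDiff ℝ (⊤:ℕ∞) F) (t : ℝ) (p : ℝ×ℝ) :
    HasDerivAt (fun s => F (s,p)) (dT F (t,p)) t := by
  have hι : HasDerivAt (fun s : ℝ => ((s,p) : ℝ×(ℝ×ℝ))) ((1:ℝ),((0:ℝ),(0:ℝ))) t :=
    (hasDerivAt_id t).prodMk (hasDerivAt_const t p)
  exact ((hF.differentiable (by simp) (t,p)).hasFDerivAt).comp_hasDerivAt t hι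

lemma dT_dX {F : ℝ×(ℝ×ℝ) → ℝ} (hF : ContDiff ℝ (⊤:ℕ∞) F) : dT (dX F) = dX (dT F) :=
  dd_comm _ _ hF

lemma dT_dY {F : ℝ×(ℝ×ℝ) → ℝ} (hF : ContDiff ℝ (⊤:ℕ∞) F) : dT (dY F) = dY (dT F) :=
  dd_comm _ _ hF

lemma dT_LL {F : ℝ×(ℝ×ℝ) → ℝ} (hF : ContDiff ℝ (⊤:ℕ∞) F) : dT (LL F) = LL (dT F) := by
  have h1 : Differentiable ℝ (dX (dX F)) :=
    (contDiff_dX (contDiff_dX hF)).differentiable (by simp)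
  have h2 : Differentiable ℝ (dY (dY F)) :=
    (contDiff_dY (contDiff_dY hF)).differentiable (by simp)
  show dd _ (fun q => dX (dX F) q + dY (dY F) q) = _
  rw [dd_add _ h1 h2]
  have e1 : dT (dX (dX F)) = dX (dX (dT F)) := by
    rw [dT_dX (contDiff_dX hF), dT_dX hF]
  have e2 : dT (dY (dY F)) = dY (dY (dT F)) := by
    rw [dT_dY (contDiff_dY hF), dT_dY hF]
  funext q
  show dT (dX (dX F)) q + dT (dY (dY F)) q = LL (dT F) q
  rw [e1, e2]
  rfl

lemma volume_disk_lt_top : volume disk < ⊤ :=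
  lt_of_le_of_lt (measure_mono disk_subset_closedBall)
    (isCompact_closedBall _ _).measure_lt_top

/-- Differentiation under the integral over the disk. -/
lemma hasDerivAt_intdisk {e : ℝ×(ℝ×ℝ) → ℝ} (he : ContDiff ℝ (⊤:ℕ∞) e) (t : ℝ) :
    HasDerivAt (fun s => ∫ p in disk, e (s,p)) (∫ p in disk, dT e (t,p)) t := by
  have hKcomp : IsCompact ((Set.Icc (t-1) (t+1)) ×ˢ Metric.closedBall (0:ℝ×ℝ) 1) :=
    isCompact_Icc.prod (isCompact_closedBall _ _)
  have hcontdT : Continuous (dT e) := (contDiff_dT he).continuous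
  obtain ⟨C, hC⟩ := hKcomp.exists_bound_of_continuousOn hcontdT.continuousOn
  have key := hasDerivAt_integral_of_dominated_loc_of_deriv_le
    (μ := volume.restrict disk) (x₀ := t)
    (F := fun s p => e (s,p)) (F' := fun s p => dT e (s,p)) (bound := fun _ => C)
    (s := Metric.ball t 1) (Metric.ball_mem_nhds t one_pos)
    (Filter.Eventually.of_forall (fun s =>
      ((slice_contDiff he s).continuous).aestronglyMeasurable))
    (integrableOn_disk (slice_contDiff he t).continuous)
    (((slice_contDiff (contDiff_dT he) t).continuous).aestronglyMeasurable)
    ?_ ?_ ?_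
  · exact key.2
  · apply MeasureTheory.ae_restrict_of_forall_mem measurableSet_disk
    intro p hp s hs
    apply hC
    constructor
    · have := Metric.mem_ball.mp hs
      rw [Real.dist_eq] at this
      constructor <;> [linarith [abs_le.mp (le_of_lt this)]; linarith [abs_le.mp (le_of_lt this)]]
    · exact disk_subset_closedBall hp
  · exact MeasureTheory.integrableOn_const (ne_of_lt volume_disk_lt_top)
  · apply MeasureTheory.ae_restrict_of_forall_mem measurableSet_disk
    intro p _ s _
    exact hasDerivAt_tslice he s p

/-! dT versions of the Leibniz rules -/

lemma dT_add {f g : ℝ×(ℝ×ℝ) → ℝ} (hf : Differentiable ℝ f) (hg : Differentiable ℝ g) :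
    dT (fun q => f q + g q) = fun q => dT f q + dT g q := dd_add _ hf hg

lemma dT_const_mul (c : ℝ) {f : ℝ×(ℝ×ℝ) → ℝ} (hf : Differentiable ℝ f) :
    dT (fun q => c * f q) = fun q => c * dT f q := dd_const_mul _ c hf

lemma dT_mul {f g : ℝ×(ℝ×ℝ) → ℝ} (hf : Differentiable ℝ f) (hg : Differentiable ℝ g) :
    dT (fun q => f q * g q) = fun q => dT f q * g q + f q * dT g q := dd_mul _ hf hg

/-- Energy stability: for `R < R_E` every disturbance decays to the base flow
at least exponentially, `E(t) ≤ e^{−c_R t} E(0)` with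
`c_R = (2Rη/(1+εη))(1/R² − 1/R_E²) > 0`. -/
theorem energy_stability (ε η RE R : ℝ) (hε : 0 ≤ ε) (hη : 0 < η)
    (hRE : 0 < RE) (hR : 0 < R) (hRRE : R < RE)
    (w ψ : ℝ → ℝ × ℝ → ℝ)
    (hw : ContDiff ℝ (⊤ : ℕ∞) (fun q : ℝ × (ℝ × ℝ) => w q.1 q.2))
    (hψ : ContDiff ℝ (⊤ : ℕ∞) (fun q : ℝ × (ℝ × ℝ) => ψ q.1 q.2))
    (heq1 : ∀ t : ℝ, ∀ p ∈ disk,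
      deriv (fun s => w s p - ε * lap (w s) p) t
        = (1 / R) * lap (w t) p + R * azim (ψ t) p
          + jac (ψ t) (fun q => w t q - ε * lap (w t) q) p)
    (heq2 : ∀ t : ℝ, ∀ p ∈ disk,
      deriv (fun s => ε * lap (lap (ψ s)) p - lap (ψ s) p) t
        = -(1 / R) * lap (lap (ψ t)) p + ε * R * lap (azim (w t)) p
          + jac (fun q => lap (ψ t) q - ε * lap (lap (ψ t)) q) (ψ t) p
          + ε * jac (lap (w t)) (w t) p)
    (hbc : ∀ t : ℝ, ∀ p ∈ bdry,
      w t p = 0 ∧ ψ t p = 0 ∧ pdx (ψ t) p = 0 ∧ pdy (ψ t) p = 0)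
    (hI2 : ∀ t : ℝ,
      ip (azim (ψ t)) (fun q => w t q - ε * lap (w t) q)
        ≤ (gradNsq (w t) + nsq (lap (ψ t))) / RE ^ 2)
    (hpw : ∀ t : ℝ, gradNsq (w t) ≥ η * nsq (w t))
    (hpψ : ∀ t : ℝ, nsq (lap (ψ t)) ≥ η * gradNsq (ψ t))
    (cR : ℝ) (hcR : cR = (2 * R * η / (1 + ε * η)) * (1 / R ^ 2 - 1 / RE ^ 2)) :
    0 < cR ∧
    ∀ t : ℝ, 0 ≤ t →
      nsq (w t) + ε * gradNsq (w t) + gradNsq (ψ t) + ε * nsq (lap (ψ t))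
        ≤ Real.exp (-cR * t) *
          (nsq (w 0) + ε * gradNsq (w 0) + gradNsq (ψ 0) + ε * nsq (lap (ψ 0))) := by
  
  -- the uncurried fields
  set W : ℝ×(ℝ×ℝ) → ℝ := fun q => w q.1 q.2 with hWdef
  set Ψ : ℝ×(ℝ×ℝ) → ℝ := fun q => ψ q.1 q.2 with hΨdef
  have hW : ContDiff ℝ (⊤:ℕ∞) W := hw
  have hΨ : ContDiff ℝ (⊤:ℕ∞) Ψ := hψ
  have hWdT := contDiff_dT hW
  have hΨdT := contDiff_dT hΨ
  -- slice smoothness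
  have ha : ∀ t, ContDiff ℝ (⊤:ℕ∞) (w t) := fun t => slice_contDiff hW t
  have hb : ∀ t, ContDiff ℝ (⊤:ℕ∞) (ψ t) := fun t => slice_contDiff hΨ t
  have hadot : ∀ t, ContDiff ℝ (⊤:ℕ∞) (fun p => dT W (t,p)) := fun t => slice_contDiff hWdT t
  have hbdot : ∀ t, ContDiff ℝ (⊤:ℕ∞) (fun p => dT Ψ (t,p)) := fun t => slice_contDiff hΨdT t
  -- slice identities
  have hpdxw : ∀ t, pdx (w t) = fun p => dX W (t,p) := fun t => pdx_tslice hW t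
  have hpdyw : ∀ t, pdy (w t) = fun p => dY W (t,p) := fun t => pdy_tslice hW t
  have hpdxψ : ∀ t, pdx (ψ t) = fun p => dX Ψ (t,p) := fun t => pdx_tslice hΨ t
  have hpdyψ : ∀ t, pdy (ψ t) = fun p => dY Ψ (t,p) := fun t => pdy_tslice hΨ t
  have hlapw : ∀ t, lap (w t) = fun p => LL W (t,p) := fun t => lapslice hW t
  have hlapψ : ∀ t, lap (ψ t) = fun p => LL Ψ (t,p) := fun t => lapslice hΨ t
  have hpdxwd : ∀ t, pdx (fun p => dT W (t,p)) = fun p => dX (dT W) (t,p) :=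
    fun t => pdx_tslice hWdT t
  have hpdywd : ∀ t, pdy (fun p => dT W (t,p)) = fun p => dY (dT W) (t,p) :=
    fun t => pdy_tslice hWdT t
  have hpdxψd : ∀ t, pdx (fun p => dT Ψ (t,p)) = fun p => dX (dT Ψ) (t,p) :=
    fun t => pdx_tslice hΨdT t
  have hpdyψd : ∀ t, pdy (fun p => dT Ψ (t,p)) = fun p => dY (dT Ψ) (t,p) :=
    fun t => pdy_tslice hΨdT t
  have hlapwd : ∀ t, lap (fun p => dT W (t,p)) = fun p => LL (dT W) (t,p) :=
    fun t => lapslice hWdT t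
  have hlapψd : ∀ t, lap (fun p => dT Ψ (t,p)) = fun p => LL (dT Ψ) (t,p) :=
    fun t => lapslice hΨdT t
  have hlap2ψ : ∀ t, lap (lap (ψ t)) = fun p => LL (LL Ψ) (t,p) := by
    intro t
    rw [hlapψ t]
    exact lapslice (contDiff_LL hΨ) t
  have hlap2ψd : ∀ t, lap (lap (fun p => dT Ψ (t,p))) = fun p => LL (LL (dT Ψ)) (t,p) := by
    intro t
    rw [hlapψd t]
    exact lapslice (contDiff_LL hΨdT) t
  -- converted PDEs
  have e1' : ∀ t, ∀ p ∈ disk,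
      (fun p => dT W (t,p)) p - ε * lap (fun p => dT W (t,p)) p
        = (1/R) * lap (w t) p + R * azim (ψ t) p
          + jac (ψ t) (fun q => w t q - ε * lap (w t) q) p := by
    intro t p hp
    have h1 : HasDerivAt (fun s => w s p) (dT W (t,p)) t := hasDerivAt_tslice hW t p
    have h2 : HasDerivAt (fun s => lap (w s) p) (LL (dT W) (t,p)) t := by
      have e : (fun s => lap (w s) p) = fun s => LL W (s,p) := by
        funext s; exact congrFun (hlapw s) p
      rw [e]
      have := hasDerivAt_tslice (contDiff_LL hW) t p
      rwa [dT_LL hW] at this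
    have hd : HasDerivAt (fun s => w s p - ε * lap (w s) p)
        (dT W (t,p) - ε * LL (dT W) (t,p)) t := h1.sub (h2.const_mul ε)
    calc (fun p => dT W (t,p)) p - ε * lap (fun p => dT W (t,p)) p
        = dT W (t,p) - ε * LL (dT W) (t,p) := by rw [congrFun (hlapwd t) p]
    _ = deriv (fun s => w s p - ε * lap (w s) p) t := hd.deriv.symm
    _ = _ := heq1 t p hp
  have e2' : ∀ t, ∀ p ∈ disk,
      ε * lap (lap (fun p => dT Ψ (t,p))) p - lap (fun p => dT Ψ (t,p)) p
        = -(1/R) * lap (lap (ψ t)) p + ε * R * lap (azim (w t)) p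
          + jac (fun q => lap (ψ t) q - ε * lap (lap (ψ t)) q) (ψ t) p
          + ε * jac (lap (w t)) (w t) p := by
    intro t p hp
    have h3 : HasDerivAt (fun s => lap (lap (ψ s)) p) (LL (LL (dT Ψ)) (t,p)) t := by
      have e : (fun s => lap (lap (ψ s)) p) = fun s => LL (LL Ψ) (s,p) := by
        funext s; exact congrFun (hlap2ψ s) p
      rw [e]
      have := hasDerivAt_tslice (contDiff_LL (contDiff_LL hΨ)) t p
      rwa [dT_LL (contDiff_LL hΨ), dT_LL hΨ] at this
    have h4 : HasDerivAt (fun s => lap (ψ s) p) (LL (dT Ψ) (t,p)) t := by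
      have e : (fun s => lap (ψ s) p) = fun s => LL Ψ (s,p) := by
        funext s; exact congrFun (hlapψ s) p
      rw [e]
      have := hasDerivAt_tslice (contDiff_LL hΨ) t p
      rwa [dT_LL hΨ] at this
    have hd : HasDerivAt (fun s => ε * lap (lap (ψ s)) p - lap (ψ s) p)
        (ε * LL (LL (dT Ψ)) (t,p) - LL (dT Ψ) (t,p)) t := (h3.const_mul ε).sub h4
    calc ε * lap (lap (fun p => dT Ψ (t,p))) p - lap (fun p => dT Ψ (t,p)) p
        = ε * LL (LL (dT Ψ)) (t,p) - LL (dT Ψ) (t,p) := by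
          rw [congrFun (hlap2ψd t) p, congrFun (hlapψd t) p]
    _ = deriv (fun s => ε * lap (lap (ψ s)) p - lap (ψ s) p) t := hd.deriv.symm
    _ = _ := heq2 t p hp
  -- boundary conditions
  have hba : ∀ t, ∀ p ∈ bdry, w t p = 0 := fun t p hp => (hbc t p hp).1
  have hbb : ∀ t, ∀ p ∈ bdry, ψ t p = 0 := fun t p hp => (hbc t p hp).2.1
  have hbbx : ∀ t, ∀ p ∈ bdry, pdx (ψ t) p = 0 := fun t p hp => (hbc t p hp).2.2.1
  have hbby : ∀ t, ∀ p ∈ bdry, pdy (ψ t) p = 0 := fun t p hp => (hbc t p hp).2.2.2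
  -- the energy identity at each time
  have hEI : ∀ t,
      ∫ p in disk, ((w t p * (fun p => dT W (t,p)) p
          + ε * (pdx (w t) p * pdx (fun p => dT W (t,p)) p
            + pdy (w t) p * pdy (fun p => dT W (t,p)) p))
        + (pdx (ψ t) p * pdx (fun p => dT Ψ (t,p)) p
            + pdy (ψ t) p * pdy (fun p => dT Ψ (t,p)) p
          + ε * (lap (ψ t) p * lap (fun p => dT Ψ (t,p)) p)))
      = -(1/R) * ((∫ p in disk, ((pdx (w t) p)^2 + (pdy (w t) p)^2))
            + ∫ p in disk, (lap (ψ t) p)^2)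
        + R * ((∫ p in disk, azim (ψ t) p * w t p)
            - ε * ∫ p in disk, azim (ψ t) p * lap (w t) p) :=
    fun t => energy_identity ε R (w t) (fun p => dT W (t,p)) (ψ t) (fun p => dT Ψ (t,p))
      (ha t) (hadot t) (hb t) (hbdot t) (hba t) (hbb t) (hbbx t) (hbby t) (e1' t) (e2' t)
  
  -- the energy integrand over space-time
  set eF : ℝ×(ℝ×ℝ) → ℝ := fun q =>
    W q * W q + ε * (dX W q * dX W q + dY W q * dY W q)
      + (dX Ψ q * dX Ψ q + dY Ψ q * dY Ψ q) + ε * (LL Ψ q * LL Ψ q) with heFdef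
  have hdXW := contDiff_dX hW
  have hdYW := contDiff_dY hW
  have hdXΨ := contDiff_dX hΨ
  have hdYΨ := contDiff_dY hΨ
  have hLLΨ := contDiff_LL hΨ
  have heF : ContDiff ℝ (⊤:ℕ∞) eF :=
    (((hW.mul hW).add (contDiff_const.mul ((hdXW.mul hdXW).add (hdYW.mul hdYW)))).add
      ((hdXΨ.mul hdXΨ).add (hdYΨ.mul hdYΨ))).add
      (contDiff_const.mul (hLLΨ.mul hLLΨ))
  have dW := hW.differentiable (by simp)
  have ddXW := hdXW.differentiable (by simp)
  have ddYW := hdYW.differentiable (by simp)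
  have ddXΨ := hdXΨ.differentiable (by simp)
  have ddYΨ := hdYΨ.differentiable (by simp)
  have dLLΨ := hLLΨ.differentiable (by simp)
  -- the time derivative of the integrand
  have hdTeF : dT eF = fun q =>
      2 * ((W q * dT W q + ε * (dX W q * dX (dT W) q + dY W q * dY (dT W) q))
        + (dX Ψ q * dX (dT Ψ) q + dY Ψ q * dY (dT Ψ) q
          + ε * (LL Ψ q * LL (dT Ψ) q))) := by
    have hA : Differentiable ℝ (fun q => W q * W q) := dW.mul dW
    have hB : Differentiable ℝ (fun q => dX W q * dX W q + dY W q * dY W q) :=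
      (ddXW.mul ddXW).add (ddYW.mul ddYW)
    have hC : Differentiable ℝ (fun q => dX Ψ q * dX Ψ q + dY Ψ q * dY Ψ q) :=
      (ddXΨ.mul ddXΨ).add (ddYΨ.mul ddYΨ)
    have hD : Differentiable ℝ (fun q => LL Ψ q * LL Ψ q) := dLLΨ.mul dLLΨ
    have hεB : Differentiable ℝ (fun q => ε * (dX W q * dX W q + dY W q * dY W q)) :=
      (differentiable_const ε).mul hB
    have hεD : Differentiable ℝ (fun q => ε * (LL Ψ q * LL Ψ q)) :=
      (differentiable_const ε).mul hD
    have hAB : Differentiable ℝ (fun q => W q * W q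
        + ε * (dX W q * dX W q + dY W q * dY W q)) := hA.add hεB
    have hABC : Differentiable ℝ (fun q => W q * W q
        + ε * (dX W q * dX W q + dY W q * dY W q)
        + (dX Ψ q * dX Ψ q + dY Ψ q * dY Ψ q)) := hAB.add hC
    rw [heFdef]
    rw [dT_add hABC hεD, dT_add hAB hC, dT_add hA hεB, dT_const_mul ε hB, dT_const_mul ε hD,
      dT_add (ddXW.fun_mul ddXW) (ddYW.fun_mul ddYW), dT_add (ddXΨ.fun_mul ddXΨ) (ddYΨ.fun_mul ddYΨ),
      dT_mul dW dW, dT_mul ddXW ddXW, dT_mul ddYW ddYW, dT_mul ddXΨ ddXΨ, dT_mul ddYΨ ddYΨ,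
      dT_mul dLLΨ dLLΨ]
    rw [dT_dX hW, dT_dY hW, dT_dX hΨ, dT_dY hΨ, dT_LL hΨ]
    funext q
    ring
  -- continuity of the slices
  have hcW : ∀ s, Continuous (fun p : ℝ×ℝ => W (s,p)) :=
    fun s => (slice_contDiff hW s).continuous
  have hcdXW : ∀ s, Continuous (fun p : ℝ×ℝ => dX W (s,p)) :=
    fun s => (slice_contDiff hdXW s).continuous
  have hcdYW : ∀ s, Continuous (fun p : ℝ×ℝ => dY W (s,p)) :=
    fun s => (slice_contDiff hdYW s).continuous
  have hcdXΨ : ∀ s, Continuous (fun p : ℝ×ℝ => dX Ψ (s,p)) :=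
    fun s => (slice_contDiff hdXΨ s).continuous
  have hcdYΨ : ∀ s, Continuous (fun p : ℝ×ℝ => dY Ψ (s,p)) :=
    fun s => (slice_contDiff hdYΨ s).continuous
  have hcLLΨ : ∀ s, Continuous (fun p : ℝ×ℝ => LL Ψ (s,p)) :=
    fun s => (slice_contDiff hLLΨ s).continuous
  -- the energy as an integral
  have hE_eq : ∀ s, nsq (w s) + ε * gradNsq (w s) + gradNsq (ψ s) + ε * nsq (lap (ψ s))
      = ∫ p in disk, eF (s,p) := by
    intro s
    have h1 : nsq (w s) = ∫ p in disk, W (s,p) * W (s,p) :=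
      icongr (fun p _ => by show (w s p)^2 = w s p * w s p; ring)
    have h2 : gradNsq (w s)
        = ∫ p in disk, (dX W (s,p) * dX W (s,p) + dY W (s,p) * dY W (s,p)) := by
      show nsq (pdx (w s)) + nsq (pdy (w s)) = _
      rw [hpdxw s, hpdyw s,
        split_add ((hcdXW s).fun_mul (hcdXW s)) ((hcdYW s).fun_mul (hcdYW s))]
      congr 1
      · exact icongr (fun p _ => by show (dX W (s,p))^2 = _; ring)
      · exact icongr (fun p _ => by show (dY W (s,p))^2 = _; ring)
    have h3 : gradNsq (ψ s)
        = ∫ p in disk, (dX Ψ (s,p) * dX Ψ (s,p) + dY Ψ (s,p) * dY Ψ (s,p)) := by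
      show nsq (pdx (ψ s)) + nsq (pdy (ψ s)) = _
      rw [hpdxψ s, hpdyψ s,
        split_add ((hcdXΨ s).fun_mul (hcdXΨ s)) ((hcdYΨ s).fun_mul (hcdYΨ s))]
      congr 1
      · exact icongr (fun p _ => by show (dX Ψ (s,p))^2 = _; ring)
      · exact icongr (fun p _ => by show (dY Ψ (s,p))^2 = _; ring)
    have h4 : nsq (lap (ψ s)) = ∫ p in disk, LL Ψ (s,p) * LL Ψ (s,p) := by
      rw [hlapψ s]
      exact icongr (fun p _ => by show (LL Ψ (s,p))^2 = _; ring)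
    have hsplit : ∫ p in disk, eF (s,p)
        = (∫ p in disk, W (s,p) * W (s,p))
          + ε * (∫ p in disk, (dX W (s,p) * dX W (s,p) + dY W (s,p) * dY W (s,p)))
          + (∫ p in disk, (dX Ψ (s,p) * dX Ψ (s,p) + dY Ψ (s,p) * dY Ψ (s,p)))
          + ε * ∫ p in disk, LL Ψ (s,p) * LL Ψ (s,p) := by
      have c1 := (hcW s).fun_mul (hcW s)
      have c2 := ((hcdXW s).fun_mul (hcdXW s)).fun_add ((hcdYW s).fun_mul (hcdYW s))
      have c3 := ((hcdXΨ s).fun_mul (hcdXΨ s)).fun_add ((hcdYΨ s).fun_mul (hcdYΨ s))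
      have c4 := (hcLLΨ s).fun_mul (hcLLΨ s)
      show ∫ p in disk, (W (s,p) * W (s,p)
          + ε * (dX W (s,p) * dX W (s,p) + dY W (s,p) * dY W (s,p))
          + (dX Ψ (s,p) * dX Ψ (s,p) + dY Ψ (s,p) * dY Ψ (s,p))
          + ε * (LL Ψ (s,p) * LL Ψ (s,p))) = _
      rw [split_add ((c1.fun_add (continuous_const.fun_mul c2)).fun_add c3) (continuous_const.fun_mul c4),
        split_add (c1.fun_add (continuous_const.fun_mul c2)) c3,
        split_add c1 (continuous_const.fun_mul c2), split_smul, split_smul]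
    rw [h1, h2, h3, h4, hsplit]
  -- value of the derivative integral
  have hval : ∀ t, ∫ p in disk, dT eF (t,p)
      = 2 * (-(1/R) * (gradNsq (w t) + nsq (lap (ψ t)))
        + R * ip (azim (ψ t)) (fun q => w t q - ε * lap (w t) q)) := by
    intro t
    have hbig : ∫ p in disk, dT eF (t,p)
        = 2 * ∫ p in disk,
          ((W (t,p) * dT W (t,p)
            + ε * (dX W (t,p) * dX (dT W) (t,p) + dY W (t,p) * dY (dT W) (t,p)))
          + (dX Ψ (t,p) * dX (dT Ψ) (t,p) + dY Ψ (t,p) * dY (dT Ψ) (t,p)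
            + ε * (LL Ψ (t,p) * LL (dT Ψ) (t,p)))) := by
      rw [icongr (fun p _ => by rw [congrFun hdTeF (t,p)]), split_smul]
    have hmatch : ∫ p in disk,
          ((W (t,p) * dT W (t,p)
            + ε * (dX W (t,p) * dX (dT W) (t,p) + dY W (t,p) * dY (dT W) (t,p)))
          + (dX Ψ (t,p) * dX (dT Ψ) (t,p) + dY Ψ (t,p) * dY (dT Ψ) (t,p)
            + ε * (LL Ψ (t,p) * LL (dT Ψ) (t,p))))
        = ∫ p in disk, ((w t p * (fun p => dT W (t,p)) p
            + ε * (pdx (w t) p * pdx (fun p => dT W (t,p)) p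
              + pdy (w t) p * pdy (fun p => dT W (t,p)) p))
          + (pdx (ψ t) p * pdx (fun p => dT Ψ (t,p)) p
              + pdy (ψ t) p * pdy (fun p => dT Ψ (t,p)) p
            + ε * (lap (ψ t) p * lap (fun p => dT Ψ (t,p)) p))) := by
      apply icongr
      intro p _
      rw [congrFun (hpdxw t) p, congrFun (hpdyw t) p, congrFun (hpdxwd t) p,
        congrFun (hpdywd t) p, congrFun (hpdxψ t) p, congrFun (hpdyψ t) p,
        congrFun (hpdxψd t) p, congrFun (hpdyψd t) p, congrFun (hlapψ t) p,
        congrFun (hlapψd t) p]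
    have hgr : gradNsq (w t) = ∫ p in disk, ((pdx (w t) p)^2 + (pdy (w t) p)^2) :=
      (split_add ((continuous_pdx (ha t)).pow 2) ((continuous_pdy (ha t)).pow 2)).symm
    have hip : ip (azim (ψ t)) (fun q => w t q - ε * lap (w t) q)
        = (∫ p in disk, azim (ψ t) p * w t p)
          - ε * ∫ p in disk, azim (ψ t) p * lap (w t) p := by
      show ∫ p in disk, azim (ψ t) p * (w t p - ε * lap (w t) p) = _
      rw [icongr (f := fun p => azim (ψ t) p * (w t p - ε * lap (w t) p))
        (g := fun p => azim (ψ t) p * w t p - ε * (azim (ψ t) p * lap (w t) p))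
        (fun p _ => by ring),
        split_sub ((continuous_azim (hb t)).fun_mul (ha t).continuous)
          (continuous_const.fun_mul ((continuous_azim (hb t)).fun_mul (continuous_lap (ha t)))),
        split_smul]
    rw [hbig, hmatch, hEI t, hgr, hip]
    rfl
  -- the derivative of the energy
  have hEderiv : ∀ t, HasDerivAt
      (fun s => nsq (w s) + ε * gradNsq (w s) + gradNsq (ψ s) + ε * nsq (lap (ψ s)))
      (2 * (-(1/R) * (gradNsq (w t) + nsq (lap (ψ t)))
        + R * ip (azim (ψ t)) (fun q => w t q - ε * lap (w t) q))) t := by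
    intro t
    have h0 := hasDerivAt_intdisk heF t
    rw [hval t] at h0
    have hfun : (fun s => nsq (w s) + ε * gradNsq (w s) + gradNsq (ψ s)
        + ε * nsq (lap (ψ s))) = fun s => ∫ p in disk, eF (s,p) := funext hE_eq
    rw [hfun]
    exact h0
  -- positivity of cR
  have hR2 : (0:ℝ) < R^2 := by positivity
  have hRE2 : (0:ℝ) < RE^2 := by positivity
  have hinv : 1/RE^2 < 1/R^2 := by
    apply one_div_lt_one_div_of_lt hR2
    exact pow_lt_pow_left₀ hRRE (le_of_lt hR) (by norm_num)
  have hεη : (0:ℝ) < 1 + ε * η := by positivity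
  have hcR0 : 0 < cR := by
    rw [hcR]
    apply mul_pos
    · positivity
    · linarith
  refine ⟨hcR0, fun t ht => ?_⟩
  -- the differential inequality
  have hKey : ∀ s, 2 * (-(1/R) * (gradNsq (w s) + nsq (lap (ψ s)))
      + R * ip (azim (ψ s)) (fun q => w s q - ε * lap (w s) q))
      ≤ -cR * (nsq (w s) + ε * gradNsq (w s) + gradNsq (ψ s) + ε * nsq (lap (ψ s))) := by
    intro s
    set I1 : ℝ := gradNsq (w s) + nsq (lap (ψ s)) with hI1def
    set Es : ℝ := nsq (w s) + ε * gradNsq (w s) + gradNsq (ψ s) + ε * nsq (lap (ψ s))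
      with hEsdef
    have hi2 := hI2 s
    have h1 : η * nsq (w s) ≤ gradNsq (w s) := hpw s
    have h2 : η * gradNsq (ψ s) ≤ nsq (lap (ψ s)) := hpψ s
    have hEI1 : η * Es ≤ (1 + ε * η) * I1 := by
      rw [hEsdef, hI1def]
      nlinarith [mul_nonneg hε (sub_nonneg.mpr h1), mul_nonneg hε (sub_nonneg.mpr h2)]
    set K : ℝ := 2 * R * (1/R^2 - 1/RE^2) with hKdef
    have hK0 : 0 < K := by
      rw [hKdef]
      apply mul_pos (by linarith)
      linarith
    have hstep1 : 2 * (-(1/R) * I1 + R * ip (azim (ψ s)) (fun q => w s q - ε * lap (w s) q))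
        ≤ -K * I1 := by
      have hRpos : (0:ℝ) < R := hR
      have : R * ip (azim (ψ s)) (fun q => w s q - ε * lap (w s) q) ≤ R * (I1 / RE^2) :=
        mul_le_mul_of_nonneg_left hi2 (le_of_lt hRpos)
      have hexp : -K * I1 = 2 * (-(1/R) * I1 + R * (I1 / RE^2)) := by
        rw [hKdef]
        field_simp
        ring
      rw [hexp]
      linarith
    have hstep2 : cR * Es ≤ K * I1 := by
      have hcRK : cR * (1 + ε * η) = K * η := by
        rw [hcR, hKdef]
        field_simp
      have := mul_le_mul_of_nonneg_left hEI1 (le_of_lt hcR0)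
      -- cR * (η * Es) ≤ cR * ((1+εη) * I1) = K * η * I1
      have h3 : cR * ((1 + ε * η) * I1) = η * (K * I1) := by
        calc cR * ((1 + ε * η) * I1) = (cR * (1 + ε * η)) * I1 := by ring
        _ = (K * η) * I1 := by rw [hcRK]
        _ = η * (K * I1) := by ring
      rw [h3] at this
      have h4 : η * (cR * Es) ≤ η * (K * I1) := by
        calc η * (cR * Es) = cR * (η * Es) := by ring
        _ ≤ η * (K * I1) := this
      exact le_of_mul_le_mul_left h4 hη
    have hneg : -K * I1 ≤ -cR * Es := by
      rw [neg_mul, neg_mul]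
      exact neg_le_neg hstep2
    exact le_trans hstep1 hneg
  -- Gronwall
  set g : ℝ → ℝ := fun s =>
    (nsq (w s) + ε * gradNsq (w s) + gradNsq (ψ s) + ε * nsq (lap (ψ s)))
      * Real.exp (cR * s) with hgdef
  have hgderiv : ∀ s, HasDerivAt g
      ((2 * (-(1/R) * (gradNsq (w s) + nsq (lap (ψ s)))
        + R * ip (azim (ψ s)) (fun q => w s q - ε * lap (w s) q))) * Real.exp (cR * s)
      + (nsq (w s) + ε * gradNsq (w s) + gradNsq (ψ s) + ε * nsq (lap (ψ s)))
        * (Real.exp (cR * s) * cR)) s := by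
    intro s
    have hexp : HasDerivAt (fun x : ℝ => Real.exp (cR * x)) (Real.exp (cR * s) * cR) s := by
      simpa using HasDerivAt.exp ((hasDerivAt_id s).const_mul cR)
    exact (hEderiv s).mul hexp
  have hgdiff : Differentiable ℝ g := fun s => (hgderiv s).differentiableAt
  have hgnonpos : ∀ s, deriv g s ≤ 0 := by
    intro s
    rw [(hgderiv s).deriv]
    have hk := hKey s
    have hepos := Real.exp_pos (cR * s)
    nlinarith [mul_le_mul_of_nonneg_right hk (le_of_lt hepos)]
  have hant : Antitone g := antitone_of_deriv_nonpos hgdiff hgnonpos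
  have hg0 : g t ≤ g 0 := hant ht
  have hgt : g t = (nsq (w t) + ε * gradNsq (w t) + gradNsq (ψ t) + ε * nsq (lap (ψ t)))
      * Real.exp (cR * t) := rfl
  have hg00 : g 0 = nsq (w 0) + ε * gradNsq (w 0) + gradNsq (ψ 0) + ε * nsq (lap (ψ 0)) := by
    show (nsq (w 0) + ε * gradNsq (w 0) + gradNsq (ψ 0) + ε * nsq (lap (ψ 0)))
      * Real.exp (cR * 0) = _
    rw [mul_zero, Real.exp_zero, mul_one]
  rw [hgt, hg00] at hg0
  have hepos := Real.exp_pos (cR * t)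
  have hfinal := mul_le_mul_of_nonneg_right hg0 (le_of_lt (Real.exp_pos (-(cR * t))))
  rw [mul_assoc, ← Real.exp_add] at hfinal
  simp only [add_neg_cancel, Real.exp_zero, mul_one] at hfinal
  calc nsq (w t) + ε * gradNsq (w t) + gradNsq (ψ t) + ε * nsq (lap (ψ t)) ≤
      (nsq (w 0) + ε * gradNsq (w 0) + gradNsq (ψ 0) + ε * nsq (lap (ψ 0)))
        * Real.exp (-(cR * t)) := hfinal
  _ = Real.exp (-cR * t) * (nsq (w 0) + ε * gradNsq (w 0) + gradNsq (ψ 0)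
        + ε * nsq (lap (ψ 0))) := by rw [neg_mul, mul_comm]
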